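/- arXiv:2110.12573 — 6 statements merged into one kernel-verified Lean document; each statement's English description precedes it below -/
import Mathlib

section
/- With $Z = I\{X \geq \gamma \text{ or } X \leq -2\gamma\} e^{-\gamma X + \gamma^2/2}$ under $X \sim N(\gamma,1)$, and $p = \bar\Phi(\gamma) + \bar\Phi(2\gamma)$, the relative second moment satisfies $\tilde E(Z^2)/p^2 = \Theta(\gamma e^{3\gamma^2/2})$ as $\gamma \to \infty$; in particular, $\lim_{\gamma\to\infty} \frac{\log(\tilde E(Z^2)/p^2)}{-\log p} > 0$, so $Z$ is not asymptotically efficient. -/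
open MeasureTheory Real Set Filter

/-- Standard normal tail function. -/
noncomputable def PhiBar (x : ℝ) : ℝ :=
  ∫ t in Ici x, (Real.sqrt (2 * π))⁻¹ * Real.exp (-t ^ 2 / 2)

/-- Rare-event probability `p = P(X ≥ γ or X ≤ -2γ)` for `X ∼ N(0,1)`. -/
noncomputable def rareProb (γ : ℝ) : ℝ := PhiBar γ + PhiBar (2 * γ)

/-- Relative second moment `Ẽ(Z²)/p²` of the one-point IS estimator under `N(γ,1)`. -/
noncomputable def relSecondMoment (γ : ℝ) : ℝ :=
  (∫ x in {x : ℝ | γ ≤ x ∨ x ≤ -2 * γ},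
      (Real.exp (-γ * x + γ ^ 2 / 2)) ^ 2 *
        ((Real.sqrt (2 * π))⁻¹ * Real.exp (-(x - γ) ^ 2 / 2))) / (rareProb γ) ^ 2

namespace ISAux

noncomputable def c0 : ℝ := (Real.sqrt (2 * π))⁻¹

lemma c0_pos : 0 < c0 := by
  have : (0:ℝ) < Real.sqrt (2 * π) := Real.sqrt_pos.2 (by positivity)
  exact inv_pos.2 this

lemma gauss_integrable : Integrable (fun x : ℝ => Real.exp (-x^2/2)) := by
  have h := integrable_exp_neg_mul_sq (by norm_num : (0:ℝ) < 1/2)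
  have h2 : (fun x : ℝ => Real.exp (-x^2/2)) = fun x => Real.exp (-(1/2)*x^2) := by
    funext x; congr 1; ring
  rw [h2]; exact h

lemma gauss_shift_integrable (c : ℝ) : Integrable (fun x : ℝ => Real.exp (-(x+c)^2/2)) :=
  gauss_integrable.comp_add_right c

lemma PhiBar_eq (x : ℝ) : PhiBar x = c0 * ∫ t in Ici x, Real.exp (-t^2/2) := by
  rw [PhiBar, ← integral_const_mul]
  rfl

lemma tail_nonneg (x : ℝ) : 0 ≤ ∫ t in Ici x, Real.exp (-t^2/2) :=
  setIntegral_nonneg measurableSet_Ici (fun t _ => (Real.exp_pos _).le)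

lemma PhiBar_nonneg (x : ℝ) : 0 ≤ PhiBar x := by
  rw [PhiBar_eq]; exact mul_nonneg c0_pos.le (tail_nonneg x)

lemma tail_anti {x y : ℝ} (h : x ≤ y) :
    (∫ t in Ici y, Real.exp (-t^2/2)) ≤ ∫ t in Ici x, Real.exp (-t^2/2) := by
  apply setIntegral_mono_set gauss_integrable.integrableOn
  · exact Filter.Eventually.of_forall fun t => (Real.exp_pos _).le
  · exact HasSubset.Subset.eventuallyLE (Ici_subset_Ici.2 h)

lemma PhiBar_anti {x y : ℝ} (h : x ≤ y) : PhiBar y ≤ PhiBar x := by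
  rw [PhiBar_eq, PhiBar_eq]
  exact mul_le_mul_of_nonneg_left (tail_anti h) c0_pos.le

lemma moment_tail (x : ℝ) : ∫ t in Ioi x, t * Real.exp (-t^2/2) = Real.exp (-x^2/2) := by
  have hd : ∀ t ∈ Ici x, HasDerivAt (fun t : ℝ => -Real.exp (-t^2/2)) (t * Real.exp (-t^2/2)) t := by
    intro t _
    have h1 : HasDerivAt (fun t : ℝ => -t^2/2) (-t) t := by
      have := ((hasDerivAt_pow 2 t).neg.div_const 2)
      refine this.congr_deriv ?_
      · norm_num; ring
    have h2 := h1.exp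
    exact h2.neg.congr_deriv (by ring)
  have hint : IntegrableOn (fun t : ℝ => t * Real.exp (-t^2/2)) (Ioi x) := by
    have h := integrable_mul_exp_neg_mul_sq (by norm_num : (0:ℝ) < 1/2)
    have h2 : (fun t : ℝ => t * Real.exp (-t^2/2)) = fun t => t * Real.exp (-(1/2)*t^2) := by
      funext t; congr 2; ring
    rw [h2]; exact h.integrableOn
  have htend : Tendsto (fun t : ℝ => -Real.exp (-t^2/2)) atTop (nhds 0) := by
    have h1 : Tendsto (fun t : ℝ => -t^2/2) atTop atBot := by
      apply Filter.Tendsto.atBot_div_const (by norm_num : (0:ℝ) < 2)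
      exact tendsto_neg_atTop_atBot.comp (tendsto_pow_atTop (by norm_num : 2 ≠ 0))
    have h2 := (Real.tendsto_exp_atBot.comp h1).neg
    simpa [Function.comp_def] using h2
  have := integral_Ioi_of_hasDerivAt_of_tendsto' hd hint htend
  rw [this]; simp

lemma tail_ub {x : ℝ} (hx : 0 < x) :
    (∫ t in Ici x, Real.exp (-t^2/2)) ≤ Real.exp (-x^2/2) / x := by
  have hint : IntegrableOn (fun t : ℝ => t * Real.exp (-t^2/2)) (Ici x) := by
    have h := integrable_mul_exp_neg_mul_sq (by norm_num : (0:ℝ) < 1/2)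
    have h2 : (fun t : ℝ => t * Real.exp (-t^2/2)) = fun t => t * Real.exp (-(1/2)*t^2) := by
      funext t; congr 2; ring
    rw [h2]; exact h.integrableOn
  have step1 : (∫ t in Ici x, Real.exp (-t^2/2)) ≤ ∫ t in Ici x, x⁻¹ * (t * Real.exp (-t^2/2)) := by
    apply setIntegral_mono_on gauss_integrable.integrableOn (hint.const_mul x⁻¹) measurableSet_Ici
    intro t ht
    rw [mem_Ici] at ht
    have h1 : 1 ≤ x⁻¹ * t := by
      rw [← div_eq_inv_mul, le_div_iff₀ hx]; linarith
    calc Real.exp (-t^2/2) = 1 * Real.exp (-t^2/2) := (one_mul _).symm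
      _ ≤ (x⁻¹ * t) * Real.exp (-t^2/2) :=
          mul_le_mul_of_nonneg_right h1 (Real.exp_pos _).le
      _ = x⁻¹ * (t * Real.exp (-t^2/2)) := by ring
  have step2 : ∫ t in Ici x, x⁻¹ * (t * Real.exp (-t^2/2)) = Real.exp (-x^2/2) / x := by
    rw [integral_const_mul, integral_Ici_eq_integral_Ioi, moment_tail]
    rw [inv_mul_eq_div]
  linarith [step1, step2.le, step2.ge]

lemma tail_lb {x : ℝ} (hx : 1 ≤ x) :
    Real.exp (-3/2) * (Real.exp (-x^2/2) / x) ≤ ∫ t in Ici x, Real.exp (-t^2/2) := by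
  have hx0 : 0 < x := lt_of_lt_of_le one_pos hx
  have hsub : Icc x (x + 1/x) ⊆ Ici x := fun t ht => ht.1
  have step1 : (∫ t in Icc x (x + 1/x), Real.exp (-t^2/2)) ≤ ∫ t in Ici x, Real.exp (-t^2/2) := by
    apply setIntegral_mono_set gauss_integrable.integrableOn
    · exact Filter.Eventually.of_forall fun t => (Real.exp_pos _).le
    · exact HasSubset.Subset.eventuallyLE hsub
  have step2 : Real.exp (-(x+1/x)^2/2) * (1/x) ≤ ∫ t in Icc x (x + 1/x), Real.exp (-t^2/2) := by
    have h := setIntegral_ge_of_const_le (μ := volume) measurableSet_Icc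
      (measure_Icc_lt_top).ne
      (f := fun t : ℝ => Real.exp (-t^2/2)) (c := Real.exp (-(x+1/x)^2/2))
      (fun t ht => by
        apply Real.exp_le_exp.2
        have ht1 : x ≤ t := ht.1
        have ht2 : t ≤ x + 1/x := ht.2
        have htn : 0 ≤ t := le_trans hx0.le ht1
        have hsq : t^2 ≤ (x+1/x)^2 := by nlinarith
        linarith)
      gauss_integrable.integrableOn
    have hvol : volume.real (Icc x (x + 1/x)) = 1/x := by
      rw [measureReal_def, Real.volume_Icc, show x + 1/x - x = 1/x from by ring,
        ENNReal.toReal_ofReal (by positivity)]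
    rw [hvol, smul_eq_mul] at h
    linarith
  have step3 : Real.exp (-3/2) * (Real.exp (-x^2/2) / x) ≤ Real.exp (-(x+1/x)^2/2) * (1/x) := by
    have key : Real.exp (-3/2) * Real.exp (-x^2/2) ≤ Real.exp (-(x+1/x)^2/2) := by
      rw [← Real.exp_add]
      apply Real.exp_le_exp.2
      have hxne : x ≠ 0 := hx0.ne'
      have hexp : (x+1/x)^2 = x^2 + 2 + (1/x)^2 := by field_simp; ring
      have hx2 : (1:ℝ) ≤ x^2 := by nlinarith
      have h1 : (1/x)^2 ≤ 1 := by
        rw [div_pow, one_pow, div_le_one (by positivity)]; exact hx2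
      rw [hexp]; linarith
    calc Real.exp (-3/2) * (Real.exp (-x^2/2) / x)
        = (Real.exp (-3/2) * Real.exp (-x^2/2)) * (1/x) := by ring
      _ ≤ Real.exp (-(x+1/x)^2/2) * (1/x) :=
          mul_le_mul_of_nonneg_right key (by positivity)
  linarith

lemma shift_Ici (f : ℝ → ℝ) (a c : ℝ) : ∫ x in Ici a, f (x + c) = ∫ x in Ici (a + c), f x := by
  have A : MeasurableEmbedding (fun x : ℝ => x + c) :=
    (Homeomorph.addRight c).isClosedEmbedding.measurableEmbedding
  have h := A.setIntegral_map (μ := volume) f (Ici (a+c))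
  rw [map_add_right_eq_self volume c] at h
  rw [h]; congr 1
  ext x; simp

lemma shift_Iic (f : ℝ → ℝ) (a c : ℝ) : ∫ x in Iic a, f (x + c) = ∫ x in Iic (a + c), f x := by
  have A : MeasurableEmbedding (fun x : ℝ => x + c) :=
    (Homeomorph.addRight c).isClosedEmbedding.measurableEmbedding
  have h := A.setIntegral_map (μ := volume) f (Iic (a+c))
  rw [map_add_right_eq_self volume c] at h
  rw [h]; congr 1
  ext x; simp

lemma momInt {γ : ℝ} (hγ : 0 < γ) :
    (∫ x in {x : ℝ | γ ≤ x ∨ x ≤ -2 * γ},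
      (Real.exp (-γ * x + γ ^ 2 / 2)) ^ 2 *
        ((Real.sqrt (2 * π))⁻¹ * Real.exp (-(x - γ) ^ 2 / 2)))
      = Real.exp (γ^2) * rareProb γ := by
  have hset : {x : ℝ | γ ≤ x ∨ x ≤ -2 * γ} = Ici γ ∪ Iic (-2 * γ) := by
    ext x; simp only [mem_setOf_eq, mem_union, mem_Ici, mem_Iic]
  have hfun : (fun x : ℝ => (Real.exp (-γ * x + γ ^ 2 / 2)) ^ 2 *
        ((Real.sqrt (2 * π))⁻¹ * Real.exp (-(x - γ) ^ 2 / 2)))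
      = fun x : ℝ => (c0 * Real.exp (γ^2)) * Real.exp (-(x+γ)^2/2) := by
    funext x
    have e1 : (Real.exp (-γ*x+γ^2/2))^2 * Real.exp (-(x-γ)^2/2)
        = Real.exp (γ^2 + -(x+γ)^2/2) := by
      rw [pow_two, ← Real.exp_add, ← Real.exp_add]; congr 1; ring
    calc (Real.exp (-γ * x + γ ^ 2 / 2)) ^ 2 *
          ((Real.sqrt (2 * π))⁻¹ * Real.exp (-(x - γ) ^ 2 / 2))
        = c0 * ((Real.exp (-γ*x+γ^2/2))^2 * Real.exp (-(x-γ)^2/2)) := by rw [c0]; ring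
      _ = c0 * Real.exp (γ^2 + -(x+γ)^2/2) := by rw [e1]
      _ = (c0 * Real.exp (γ^2)) * Real.exp (-(x+γ)^2/2) := by
          rw [Real.exp_add]; ring
  rw [hset, hfun, integral_const_mul]
  have hdisj : Disjoint (Ici γ) (Iic (-2 * γ)) := by
    rw [Set.disjoint_left]
    intro x hx hx'
    rw [mem_Ici] at hx; rw [mem_Iic] at hx'
    linarith
  rw [setIntegral_union hdisj measurableSet_Iic
    (gauss_shift_integrable γ).integrableOn (gauss_shift_integrable γ).integrableOn]
  have h1 : ∫ x in Ici γ, Real.exp (-(x+γ)^2/2) = ∫ x in Ici (2*γ), Real.exp (-x^2/2) := by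
    rw [shift_Ici (fun x => Real.exp (-x^2/2)) γ γ]
    norm_num [two_mul]
  have h2 : ∫ x in Iic (-2*γ), Real.exp (-(x+γ)^2/2) = ∫ x in Ici γ, Real.exp (-x^2/2) := by
    rw [shift_Iic (fun x => Real.exp (-x^2/2)) (-2*γ) γ]
    have he : (-2*γ + γ) = -γ := by ring
    rw [he]
    have h := integral_comp_neg_Iic (-γ) (fun x => Real.exp (-x^2/2))
    simp only [neg_sq, neg_neg] at h
    rw [h, integral_Ici_eq_integral_Ioi]
  rw [h1, h2, rareProb, PhiBar_eq, PhiBar_eq]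
  ring

lemma rareProb_pos {γ : ℝ} (hγ : 1 ≤ γ) : 0 < rareProb γ := by
  have h1 : 0 < PhiBar γ := by
    rw [PhiBar_eq]
    have := tail_lb hγ
    have hγ0 : 0 < γ := lt_of_lt_of_le one_pos hγ
    have hpos : 0 < Real.exp (-3/2) * (Real.exp (-γ^2/2) / γ) := by positivity
    exact mul_pos c0_pos (lt_of_lt_of_le hpos this)
  have h2 : 0 ≤ PhiBar (2*γ) := PhiBar_nonneg _
  rw [rareProb]; linarith

lemma rareProb_ub {γ : ℝ} (hγ : 1 ≤ γ) :
    rareProb γ ≤ 2 * (c0 * (Real.exp (-γ^2/2) / γ)) := by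
  have hγ0 : 0 < γ := lt_of_lt_of_le one_pos hγ
  have h1 : PhiBar (2*γ) ≤ PhiBar γ := PhiBar_anti (by linarith)
  have h2 : PhiBar γ ≤ c0 * (Real.exp (-γ^2/2) / γ) := by
    rw [PhiBar_eq]
    exact mul_le_mul_of_nonneg_left (tail_ub hγ0) c0_pos.le
  rw [rareProb]; linarith

lemma rareProb_lb {γ : ℝ} (hγ : 1 ≤ γ) :
    c0 * (Real.exp (-3/2) * (Real.exp (-γ^2/2) / γ)) ≤ rareProb γ := by
  have h2 : c0 * (Real.exp (-3/2) * (Real.exp (-γ^2/2) / γ)) ≤ PhiBar γ := by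
    rw [PhiBar_eq]
    exact mul_le_mul_of_nonneg_left (tail_lb hγ) c0_pos.le
  have h3 : 0 ≤ PhiBar (2*γ) := PhiBar_nonneg _
  rw [rareProb]; linarith

lemma relSecondMoment_eq {γ : ℝ} (hγ : 1 ≤ γ) :
    relSecondMoment γ = Real.exp (γ^2) / rareProb γ := by
  have hγ0 : 0 < γ := lt_of_lt_of_le one_pos hγ
  have hP := rareProb_pos hγ
  rw [relSecondMoment, momInt hγ0]
  field_simp

end ISAux
/-- `Ẽ(Z²)/p² = Θ(γ e^{3γ²/2})` as `γ → ∞`, hence the relative second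
moment grows exponentially in `-log p` and the estimator is not asymptotically
efficient (the ratio `log(Ẽ(Z²)/p²)/(-log p)` does not tend to 0). -/
theorem IS_missing_point_not_asymptotically_efficient :
    (∃ c₁ c₂ : ℝ, 0 < c₁ ∧ 0 < c₂ ∧ ∀ᶠ γ in atTop,
        c₁ * (γ * Real.exp (3 * γ ^ 2 / 2)) ≤ relSecondMoment γ ∧
        relSecondMoment γ ≤ c₂ * (γ * Real.exp (3 * γ ^ 2 / 2))) ∧
    ¬ Tendsto (fun γ => Real.log (relSecondMoment γ) / (-Real.log (rareProb γ)))
        atTop (nhds 0) := by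
  have hc := ISAux.c0_pos
  have hc' : ISAux.c0 ≠ 0 := hc.ne'
  constructor
  · refine ⟨(2 * ISAux.c0)⁻¹, Real.exp (3/2) * ISAux.c0⁻¹,
      inv_pos.2 (by linarith), mul_pos (Real.exp_pos _) (inv_pos.2 hc), ?_⟩
    filter_upwards [eventually_ge_atTop (1:ℝ)] with γ hγ
    have hγ0 : 0 < γ := lt_of_lt_of_le one_pos hγ
    have hP := ISAux.rareProb_pos hγ
    have hrel := ISAux.relSecondMoment_eq hγ
    have hexp3 : Real.exp (3 * γ^2/2) = Real.exp (γ^2) * Real.exp (γ^2/2) := by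
      rw [← Real.exp_add]; congr 1; ring
    constructor
    · -- lower bound
      have hU : rareProb γ ≤ 2 * (ISAux.c0 * (Real.exp (-γ^2/2) / γ)) := ISAux.rareProb_ub hγ
      have hUpos : (0:ℝ) < 2 * (ISAux.c0 * (Real.exp (-γ^2/2) / γ)) := by positivity
      have h1 : Real.exp (γ^2) / (2 * (ISAux.c0 * (Real.exp (-γ^2/2) / γ)))
          ≤ Real.exp (γ^2) / rareProb γ :=
        div_le_div_of_nonneg_left (Real.exp_pos _).le hP hU
      have h2 : (2 * ISAux.c0)⁻¹ * (γ * Real.exp (3 * γ ^ 2 / 2))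
          = Real.exp (γ^2) / (2 * (ISAux.c0 * (Real.exp (-γ^2/2) / γ))) := by
        have he : Real.exp (-γ^2/2) = (Real.exp (γ^2/2))⁻¹ := by
          rw [← Real.exp_neg]; congr 1; ring
        rw [hexp3, he]
        field_simp
      rw [hrel, h2]; exact h1
    · -- upper bound
      have hL : ISAux.c0 * (Real.exp (-3/2) * (Real.exp (-γ^2/2) / γ)) ≤ rareProb γ :=
        ISAux.rareProb_lb hγ
      have hLpos : (0:ℝ) < ISAux.c0 * (Real.exp (-3/2) * (Real.exp (-γ^2/2) / γ)) := by
        positivity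
      have h1 : Real.exp (γ^2) / rareProb γ
          ≤ Real.exp (γ^2) / (ISAux.c0 * (Real.exp (-3/2) * (Real.exp (-γ^2/2) / γ))) :=
        div_le_div_of_nonneg_left (Real.exp_pos _).le hLpos hL
      have h2 : Real.exp (γ^2) / (ISAux.c0 * (Real.exp (-3/2) * (Real.exp (-γ^2/2) / γ)))
          = Real.exp (3/2) * ISAux.c0⁻¹ * (γ * Real.exp (3 * γ ^ 2 / 2)) := by
        have he : Real.exp (-γ^2/2) = (Real.exp (γ^2/2))⁻¹ := by
          rw [← Real.exp_neg]; congr 1; ring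
        have he2 : Real.exp (-3/2 : ℝ) = (Real.exp (3/2 : ℝ))⁻¹ := by
          rw [← Real.exp_neg]; norm_num
        rw [hexp3, he, he2]
        field_simp
      rw [hrel, ← h2]; exact h1
  · -- not tendsto 0
    intro h
    have h1 : ∀ᶠ γ in atTop,
        Real.log (relSecondMoment γ) / (-Real.log (rareProb γ)) < 1 :=
      h.eventually (eventually_lt_nhds (by norm_num))
    have h2 : ∀ᶠ γ in atTop,
        (1:ℝ) ≤ Real.log (relSecondMoment γ) / (-Real.log (rareProb γ)) := by
      filter_upwards [eventually_ge_atTop (1:ℝ)] with γ hγ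
      have hγ0 : 0 < γ := lt_of_lt_of_le one_pos hγ
      have hP := ISAux.rareProb_pos hγ
      have hrel := ISAux.relSecondMoment_eq hγ
      -- P ≤ exp(-γ²/2)
      have hc1 : 2 * ISAux.c0 ≤ 1 := by
        rw [ISAux.c0]
        have h4 : (2:ℝ) ≤ Real.sqrt (2 * π) := by
          have := Real.sq_sqrt (show (0:ℝ) ≤ 2 * π by positivity)
          nlinarith [Real.pi_gt_three, Real.sqrt_nonneg (2*π)]
        have h5 : (Real.sqrt (2*π))⁻¹ ≤ 2⁻¹ := by
          apply inv_anti₀ (by norm_num) h4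
        linarith
      have hPle : rareProb γ ≤ Real.exp (-γ^2/2) := by
        have hub := ISAux.rareProb_ub hγ
        have : 2 * (ISAux.c0 * (Real.exp (-γ^2/2) / γ)) ≤ Real.exp (-γ^2/2) := by
          have hd : Real.exp (-γ^2/2) / γ ≤ Real.exp (-γ^2/2) := by
            rw [div_le_iff₀ hγ0]
            nlinarith [Real.exp_pos (-γ^2/2)]
          calc 2 * (ISAux.c0 * (Real.exp (-γ^2/2) / γ))
              = (2 * ISAux.c0) * (Real.exp (-γ^2/2) / γ) := by ring
            _ ≤ 1 * (Real.exp (-γ^2/2) / γ) := by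
                apply mul_le_mul_of_nonneg_right hc1; positivity
            _ = Real.exp (-γ^2/2) / γ := one_mul _
            _ ≤ Real.exp (-γ^2/2) := hd
        linarith
      have hlogP : Real.log (rareProb γ) ≤ -γ^2/2 := by
        calc Real.log (rareProb γ) ≤ Real.log (Real.exp (-γ^2/2)) :=
              Real.log_le_log hP hPle
          _ = -γ^2/2 := Real.log_exp _
      have hneg : 0 < -Real.log (rareProb γ) := by nlinarith
      have hlogrel : Real.log (relSecondMoment γ) = γ^2 - Real.log (rareProb γ) := by
        rw [hrel, Real.log_div (Real.exp_ne_zero _) hP.ne', Real.log_exp]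
      rw [hlogrel, le_div_iff₀ hneg]
      nlinarith
    obtain ⟨γ, hlt, hge⟩ := (h1.and h2).exists
    linarith
end

section
/- If an unbiased IS estimator $Z$ for $p = P(\mathcal A_\gamma)$ is asymptotically efficient (i.e., $\widetilde{Var}(Z)/p^2$ grows subexponentially in $-\log p$ as $\gamma\to\infty$), then $Z$ is strongly probabilistically efficient: there exists a sample size $n = n(\gamma)$ subexponential in $-\log p$ such that for every $\varepsilon > 0$, the minimal relative discrepancy $\delta_\varepsilon(\hat p, p) \to 0$ as $\gamma \to \infty$, where $\hat p$ is the sample mean of $n$ i.i.d. copies of $Z$. Moreover $\delta_\varepsilon(\hat p, p) \leq \sqrt{\widetilde{Var}(Z)/(\varepsilon n p^2)}$. -/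
open MeasureTheory ProbabilityTheory Filter Set

lemma chebyshev_mean' {Ω : Type*} [MeasurableSpace Ω] (μ : Measure Ω) [IsProbabilityMeasure μ]
    (X : ℕ → Ω → ℝ) (hmeas : ∀ i, Measurable (X i))
    (hindep : iIndepFun X μ)
    (hident : ∀ i, μ.map (X i) = μ.map (X 0)) (hL2 : MemLp (X 0) 2 μ)
    (n : ℕ) (hn : 0 < n) (c : ℝ) (hc : 0 < c) :
    μ {ω | |(∑ i ∈ Finset.range n, X i ω) / (n : ℝ) - μ[X 0]| > c}
      ≤ ENNReal.ofReal (variance (X 0) μ / (n * c ^ 2)) := by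
  have hid : ∀ i, IdentDistrib (X i) (X 0) μ μ := fun i =>
    ⟨(hmeas i).aemeasurable, (hmeas 0).aemeasurable, hident i⟩
  have hL2i : ∀ i, MemLp (X i) 2 μ := fun i => (hid i).memLp_iff.2 hL2
  have hS2 : MemLp (∑ i ∈ Finset.range n, X i) 2 μ :=
    memLp_finset_sum' _ (fun i _ => hL2i i)
  have hmeanS : ∫ ω, (∑ i ∈ Finset.range n, X i) ω ∂μ = n * ∫ ω, X 0 ω ∂μ := by
    simp only [Finset.sum_apply]
    rw [integral_finset_sum _ (fun i _ => (hL2i i).integrable one_le_two)]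
    rw [Finset.sum_congr rfl (fun i _ => (hid i).integral_eq)]
    simp [mul_comm]
  have hvarS : variance (∑ i ∈ Finset.range n, X i) μ = n * variance (X 0) μ := by
    rw [IndepFun.variance_sum (fun i _ => hL2i i)
      (fun i _ j _ hij => hindep.indepFun hij)]
    rw [Finset.sum_congr rfl (fun i _ => (hid i).variance_eq)]
    simp [mul_comm]
  have hnc : (0 : ℝ) < n * c := by positivity
  have key := meas_ge_le_variance_div_sq (μ := μ) hS2 hnc
  rw [hvarS, hmeanS] at key
  have hsub : {ω | |(∑ i ∈ Finset.range n, X i ω) / (n : ℝ) - μ[X 0]| > c}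
      ⊆ {ω | (n : ℝ) * c ≤ |(∑ i ∈ Finset.range n, X i) ω - n * μ[X 0]|} := by
    intro ω hω
    simp only [Set.mem_setOf_eq, Finset.sum_apply] at hω ⊢
    have hne : (n : ℝ) ≠ 0 := Nat.cast_ne_zero.2 hn.ne'
    have : (∑ i ∈ Finset.range n, X i ω) - n * μ[X 0]
        = (n : ℝ) * ((∑ i ∈ Finset.range n, X i ω) / (n : ℝ) - μ[X 0]) := by
      field_simp
    rw [this, abs_mul, abs_of_nonneg (by positivity : (0:ℝ) ≤ (n:ℝ))]
    exact mul_le_mul_of_nonneg_left hω.le (by positivity)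
  refine le_trans (measure_mono hsub) (le_trans key (le_of_eq ?_))
  congr 1
  have hne : (n : ℝ) ≠ 0 := Nat.cast_ne_zero.2 hn.ne'
  field_simp

lemma log_max_one' (a : ℝ) (ha : 0 ≤ a) :
    Real.log (max a 1) = max (Real.log a) 0 := by
  rcases le_total a 1 with h | h
  · rw [max_eq_right h, Real.log_one, max_eq_right (Real.log_nonpos ha h)]
  · rw [max_eq_left h, max_eq_left (Real.log_nonneg h)]

/-- an asymptotically efficient unbiased IS estimator is strongly
probabilistically efficient: one can choose a sample size `n(γ)` subexponential in
`-log p` such that for every `ε > 0` the minimal relative discrepancy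
`δ_ε(p̂,p) = inf{δ > 0 : P̃(|p̂-p| > δp) ≤ ε}` tends to 0 as `γ → ∞`; moreover
`δ_ε(p̂,p) ≤ √(Var(Z)/(ε n p²))`. -/
theorem asymptotic_efficiency_implies_strong_probabilistic_efficiency
    {Ω : Type*} [MeasurableSpace Ω] (tP : ℝ → Measure Ω)
    [∀ γ, IsProbabilityMeasure (tP γ)]
    (Z : ℝ → ℕ → Ω → ℝ) (hmeas : ∀ γ i, Measurable (Z γ i))
    (hindep : ∀ γ, iIndepFun (Z γ) (tP γ))
    (hident : ∀ γ i, (tP γ).map (Z γ i) = (tP γ).map (Z γ 0))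
    (hL2 : ∀ γ, MemLp (Z γ 0) 2 (tP γ))
    (p : ℝ → ℝ) (hp : ∀ γ, 0 < p γ) (hp0 : Tendsto p atTop (nhds 0))
    (hmean : ∀ γ, (tP γ)[Z γ 0] = p γ)
    (hAE : Tendsto
      (fun γ => Real.log (variance (Z γ 0) (tP γ) / (p γ) ^ 2) / (-Real.log (p γ)))
      atTop (nhds 0)) :
    ∃ n : ℝ → ℕ, (∀ γ, 0 < n γ) ∧
      Tendsto (fun γ => Real.log (n γ) / (-Real.log (p γ))) atTop (nhds 0) ∧
      ∀ ε : ℝ, 0 < ε →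
        (∀ γ,
          sInf {δ : ℝ | 0 < δ ∧
              tP γ {ω | |(∑ i ∈ Finset.range (n γ), Z γ i ω) / (n γ : ℝ) - p γ| >
                  δ * p γ} ≤ ENNReal.ofReal ε}
            ≤ Real.sqrt (variance (Z γ 0) (tP γ) / (ε * n γ * (p γ) ^ 2))) ∧
        Tendsto (fun γ =>
          sInf {δ : ℝ | 0 < δ ∧
              tP γ {ω | |(∑ i ∈ Finset.range (n γ), Z γ i ω) / (n γ : ℝ) - p γ| >
                  δ * p γ} ≤ ENNReal.ofReal ε})
          atTop (nhds 0) := by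
  classical
  set R : ℝ → ℝ := fun γ => variance (Z γ 0) (tP γ) / (p γ) ^ 2 with hRdef
  set L : ℝ → ℝ := fun γ => -Real.log (p γ) with hLdef
  have hR0 : ∀ γ, 0 ≤ R γ := fun γ => div_nonneg (variance_nonneg _ _) (sq_nonneg _)
  set n : ℝ → ℕ := fun γ => ⌈R γ * max 1 (L γ)⌉₊ + 1 with hndef
  have hnpos : ∀ γ, 0 < n γ := fun γ => Nat.succ_pos _
  have hn1 : ∀ γ, (1:ℝ) ≤ (n γ : ℝ) := fun γ => by exact_mod_cast hnpos γ
  have hnlb : ∀ γ, R γ * max 1 (L γ) ≤ (n γ : ℝ) := by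
    intro γ
    have := Nat.le_ceil (R γ * max 1 (L γ))
    push_cast [hndef]
    linarith
  have hLtop : Tendsto L atTop atTop := by
    have h1 : Tendsto p atTop (nhdsWithin 0 (Set.Ioi 0)) :=
      tendsto_nhdsWithin_of_tendsto_nhds_of_eventually_within _ hp0
        (Eventually.of_forall fun γ => hp γ)
    have h2 : Tendsto (fun γ => Real.log (p γ)) atTop atBot :=
      Real.tendsto_log_nhdsGT_zero.comp h1
    exact tendsto_neg_atBot_atTop.comp h2
  have hev : ∀ᶠ γ in atTop, 1 ≤ L γ := hLtop.eventually_ge_atTop 1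
  have hsub : Tendsto (fun γ => Real.log (n γ) / L γ) atTop (nhds 0) := by
    have hnub : ∀ γ, (n γ : ℝ) ≤ R γ * max 1 (L γ) + 2 := by
      intro γ
      have hx : (0:ℝ) ≤ R γ * max 1 (L γ) :=
        mul_nonneg (hR0 γ) (le_trans zero_le_one (le_max_left _ _))
      have := (Nat.ceil_lt_add_one hx)
      push_cast [hndef]
      linarith
    have t1 : Tendsto (fun γ => (2 * Real.log 3) / L γ) atTop (nhds 0) :=
      Tendsto.div_atTop tendsto_const_nhds hLtop
    have t2 : Tendsto (fun γ => max (Real.log (R γ)) 0 / L γ) atTop (nhds 0) := by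
      have hg : Tendsto (fun γ => |Real.log (R γ) / L γ|) atTop (nhds 0) := by
        simpa using hAE.abs
      refine squeeze_zero_norm (fun γ => ?_) hg
      rw [Real.norm_eq_abs, abs_div, abs_div]
      have h1 : |max (Real.log (R γ)) 0| ≤ |Real.log (R γ)| := by
        rcases le_total (Real.log (R γ)) 0 with h | h
        · simp [max_eq_right h]
        · simp [max_eq_left h]
      exact div_le_div_of_nonneg_right h1 (abs_nonneg _) |>.trans_eq rfl
    have t3 : Tendsto (fun γ => Real.log (L γ) / L γ) atTop (nhds 0) := by
      have := Real.isLittleO_log_id_atTop.tendsto_div_nhds_zero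
      exact this.comp hLtop
    have hsum : Tendsto (fun γ => (2 * Real.log 3) / L γ +
        max (Real.log (R γ)) 0 / L γ + Real.log (L γ) / L γ) atTop (nhds 0) := by
      simpa using (t1.add t2).add t3
    apply tendsto_of_tendsto_of_tendsto_of_le_of_le' tendsto_const_nhds hsum
    · filter_upwards [hev] with γ h1L
      have hLpos : (0:ℝ) < L γ := lt_of_lt_of_le one_pos h1L
      exact div_nonneg (Real.log_nonneg (hn1 γ)) hLpos.le
    · filter_upwards [hev] with γ h1L
      have hLpos : (0:ℝ) < L γ := lt_of_lt_of_le one_pos h1L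
      have hRL2 : (n γ : ℝ) ≤ R γ * L γ + 2 := by
        have := hnub γ; rwa [max_eq_right h1L] at this
      have hA : R γ * L γ ≤ max (R γ) 1 * L γ :=
        mul_le_mul_of_nonneg_right (le_max_left _ _) hLpos.le
      have hB : (1:ℝ) ≤ max (R γ) 1 * L γ := by
        nlinarith [le_max_right (R γ) 1, h1L]
      have h9 : R γ * L γ + 2 ≤ (3 * max (R γ) 1) * (3 * L γ) := by nlinarith [hA, hB]
      have hmaxpos : (0:ℝ) < max (R γ) 1 := lt_of_lt_of_le one_pos (le_max_right _ _)
      have hlog1 : Real.log (n γ) ≤ Real.log ((3 * max (R γ) 1) * (3 * L γ)) :=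
        Real.log_le_log (by exact_mod_cast hnpos γ) (le_trans hRL2 h9)
      have hlog2 : Real.log ((3 * max (R γ) 1) * (3 * L γ))
          = 2 * Real.log 3 + (max (Real.log (R γ)) 0 + Real.log (L γ)) := by
        rw [Real.log_mul (by positivity) (by positivity),
          Real.log_mul (by norm_num) hmaxpos.ne',
          Real.log_mul (by norm_num) hLpos.ne', log_max_one' _ (hR0 γ)]
        ring
      rw [← add_div, ← add_div]
      have hkey : Real.log (n γ) ≤ 2 * Real.log 3 + max (Real.log (R γ)) 0 + Real.log (L γ) := by
        rw [hlog2] at hlog1; linarith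
      exact div_le_div_of_nonneg_right hkey hLpos.le
  refine ⟨n, hnpos, hsub, ?_⟩
  intro ε hε
  have hmem : ∀ γ (δ : ℝ), 0 < δ →
      variance (Z γ 0) (tP γ) / (ε * n γ * (p γ) ^ 2) ≤ δ ^ 2 →
      δ ∈ {δ : ℝ | 0 < δ ∧
          tP γ {ω | |(∑ i ∈ Finset.range (n γ), Z γ i ω) / (n γ : ℝ) - p γ| >
              δ * p γ} ≤ ENNReal.ofReal ε} := by
    intro γ δ hδ hδ2
    refine ⟨hδ, ?_⟩
    have hpγ := hp γ
    have hnγ : (0:ℝ) < (n γ : ℝ) := by exact_mod_cast hnpos γ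
    have hcheb := chebyshev_mean' (tP γ) (Z γ) (hmeas γ) (hindep γ) (hident γ) (hL2 γ)
      (n γ) (hnpos γ) (δ * p γ) (by positivity)
    rw [hmean γ] at hcheb
    refine le_trans hcheb (ENNReal.ofReal_le_ofReal ?_)
    have h3 : variance (Z γ 0) (tP γ) ≤ δ ^ 2 * (ε * n γ * (p γ) ^ 2) :=
      (div_le_iff₀ (by positivity)).1 hδ2
    rw [div_le_iff₀ (by positivity)]
    nlinarith [h3]
  have harg : ∀ γ, (0:ℝ) ≤ variance (Z γ 0) (tP γ) / (ε * n γ * (p γ) ^ 2) := by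
    intro γ
    have hnγ : (0:ℝ) < (n γ : ℝ) := by exact_mod_cast hnpos γ
    exact div_nonneg (variance_nonneg _ _) (by positivity)
  have hbound : ∀ γ,
      sInf {δ : ℝ | 0 < δ ∧
          tP γ {ω | |(∑ i ∈ Finset.range (n γ), Z γ i ω) / (n γ : ℝ) - p γ| >
              δ * p γ} ≤ ENNReal.ofReal ε}
        ≤ Real.sqrt (variance (Z γ 0) (tP γ) / (ε * n γ * (p γ) ^ 2)) := by
    intro γ
    have hb0 : 0 ≤ Real.sqrt (variance (Z γ 0) (tP γ) / (ε * n γ * (p γ) ^ 2)) :=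
      Real.sqrt_nonneg _
    have hbsq := Real.sq_sqrt (harg γ)
    apply le_of_forall_pos_le_add
    intro η hη
    exact csInf_le ⟨0, fun δ hδ => hδ.1.le⟩
      (hmem γ _ (by positivity) (by nlinarith [hb0, hη]))
  refine ⟨hbound, ?_⟩
  have hnonneg : ∀ γ, (0:ℝ) ≤
      sInf {δ : ℝ | 0 < δ ∧
          tP γ {ω | |(∑ i ∈ Finset.range (n γ), Z γ i ω) / (n γ : ℝ) - p γ| >
              δ * p γ} ≤ ENNReal.ofReal ε} := by
    intro γ
    have hbsq := Real.sq_sqrt (harg γ)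
    have hb0 : 0 ≤ Real.sqrt (variance (Z γ 0) (tP γ) / (ε * n γ * (p γ) ^ 2)) :=
      Real.sqrt_nonneg _
    refine le_csInf ⟨_, hmem γ (Real.sqrt (variance (Z γ 0) (tP γ) / (ε * n γ * (p γ) ^ 2)) + 1)
      (by positivity) (by nlinarith [hb0])⟩ (fun δ hδ => hδ.1.le)
  have hv : Tendsto (fun γ => Real.sqrt (1/ε * (L γ)⁻¹)) atTop (nhds 0) := by
    have h1 : Tendsto (fun γ => 1/ε * (L γ)⁻¹) atTop (nhds 0) := by
      have := (tendsto_inv_atTop_zero).comp hLtop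
      simpa using this.const_mul (1/ε)
    have h2 := (Real.continuous_sqrt.tendsto 0).comp h1
    simpa [Function.comp_def] using h2
  apply tendsto_of_tendsto_of_tendsto_of_le_of_le' tendsto_const_nhds hv
    (Eventually.of_forall hnonneg)
  filter_upwards [hev] with γ h1L
  have hLpos : (0:ℝ) < L γ := lt_of_lt_of_le one_pos h1L
  refine le_trans (hbound γ) (Real.sqrt_le_sqrt ?_)
  have hpγ := hp γ
  have hnγ : (0:ℝ) < (n γ : ℝ) := by exact_mod_cast hnpos γ
  have hnlb' : R γ * L γ ≤ (n γ : ℝ) := by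
    have := hnlb γ; rwa [max_eq_right h1L] at this
  have hVL : variance (Z γ 0) (tP γ) * L γ ≤ (n γ : ℝ) * (p γ) ^ 2 := by
    have hps : (0:ℝ) < (p γ) ^ 2 := by positivity
    have e : variance (Z γ 0) (tP γ) * L γ = (R γ * L γ) * (p γ) ^ 2 := by
      rw [hRdef]; field_simp
    rw [e]
    exact mul_le_mul_of_nonneg_right hnlb' hps.le
  rw [show (1:ℝ)/ε * (L γ)⁻¹ = 1/(ε * L γ) by field_simp]
  rw [div_le_div_iff₀ (by positivity) (by positivity)]
  nlinarith [mul_le_mul_of_nonneg_left hVL hε.le]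
end

section
/- Suppose $p = p_1 + p_2$ with $p_1, p_2 \geq 0$ corresponding to disjoint events $\mathcal A^1, \mathcal A^2$, and let $\hat p = \hat p_1 + \hat p_2$ where $\hat p_j$ is the sample mean of $n$ i.i.d. copies of $Z_j = I_{\mathcal A^j} \frac{dP}{d\tilde P}$ under $\tilde P$. For any $\varepsilon > n\tilde p_2$ where $\tilde p_2 = \tilde P(\mathcal A^2)$, setting $\delta = \sqrt{\frac{\widetilde{Var}(Z_1)}{n p_1^2 (\varepsilon - n\tilde p_2)}} + \frac{p_2}{p}$, one has $\tilde P(|\hat p - p| > \delta p) \leq \varepsilon$. -/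
open MeasureTheory ProbabilityTheory Filter Set

/-- finite-sample bound for an IS estimator of `p = p₁ + p₂` based on a
partial rare-event decomposition `𝒜 = 𝒜¹ ∪ 𝒜²` (disjoint). The samples `X i` are
i.i.d. from the IS measure `P̃`, `L = dP/dP̃` is the likelihood ratio, and with
`δ = √(Var(Z₁)/(n p₁² (ε - n p̃₂))) + p₂/p` we have `P̃(|p̂ - p| > δ p) ≤ ε`. -/
theorem partial_dominating_points_finite_sample_bound
    {Ω Ω' : Type*} [MeasurableSpace Ω] [MeasurableSpace Ω']
    (tP : Measure Ω) [IsProbabilityMeasure tP]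
    (Q : Measure Ω') [IsProbabilityMeasure Q]
    (X : ℕ → Ω' → Ω) (hXmeas : ∀ i, Measurable (X i))
    (hindep : iIndepFun X Q)
    (hXlaw : ∀ i, Q.map (X i) = tP)
    (L : Ω → ℝ) (hL : Measurable L) (hLnn : ∀ ω, 0 ≤ L ω)
    (A1 A2 : Set Ω) (hA1 : MeasurableSet A1) (hA2 : MeasurableSet A2)
    (hdisj : Disjoint A1 A2)
    (p1 p2 : ℝ) (hp1 : 0 < p1) (hp2 : 0 ≤ p2)
    (hmean1 : ∫ ω, Set.indicator A1 L ω ∂tP = p1)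
    (hmean2 : ∫ ω, Set.indicator A2 L ω ∂tP = p2)
    (hL2 : MemLp (Set.indicator A1 L) 2 tP)
    (n : ℕ) (hn : 0 < n) (ε : ℝ)
    (hε : (n : ℝ) * (tP A2).toReal < ε) :
    Q {ω' | |(∑ i ∈ Finset.range n, Set.indicator (A1 ∪ A2) L (X i ω')) / (n : ℝ)
          - (p1 + p2)| >
        (Real.sqrt (variance (Set.indicator A1 L) tP /
            (n * p1 ^ 2 * (ε - n * (tP A2).toReal))) + p2 / (p1 + p2)) * (p1 + p2)}
      ≤ ENNReal.ofReal ε := by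
  classical
  set f : Ω → ℝ := Set.indicator A1 L with hfdef
  set g : Ω → ℝ := Set.indicator A2 L with hgdef
  have hf : Measurable f := hL.indicator hA1
  have hg : Measurable g := hL.indicator hA2
  set tp2 : ℝ := (tP A2).toReal with htp2
  have htp2nn : 0 ≤ tp2 := ENNReal.toReal_nonneg
  set V : ℝ := variance f tP with hVdef
  have hVnn : 0 ≤ V := variance_nonneg _ _
  set δ : ℝ := Real.sqrt (V / (n * p1 ^ 2 * (ε - n * tp2))) with hδdef
  have hδnn : 0 ≤ δ := Real.sqrt_nonneg _
  have hp : 0 < p1 + p2 := by linarith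
  have hεsub : 0 < ε - n * tp2 := by linarith
  -- the samples Y i := f ∘ X i
  set Y : ℕ → Ω' → ℝ := fun i ω' => f (X i ω') with hYdef
  have hid : ∀ i, IdentDistrib (Y i) f Q tP := by
    intro i
    have h0 : IdentDistrib (X i) id Q tP :=
      ⟨(hXmeas i).aemeasurable, aemeasurable_id, by rw [hXlaw i, Measure.map_id]⟩
    exact h0.comp hf
  have hYmem : ∀ i, MemLp (Y i) 2 Q := fun i => (hid i).symm.memLp_snd hL2
  have hYmeas : ∀ i, Measurable (Y i) := fun i => hf.comp (hXmeas i)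
  set S : Ω' → ℝ := ∑ i ∈ Finset.range n, Y i with hSdef
  have hSapp : ∀ ω', S ω' = ∑ i ∈ Finset.range n, Y i ω' := fun ω' => by
    rw [hSdef, Finset.sum_apply]
  have hSmem : MemLp S 2 Q := memLp_finset_sum' _ (fun i _ => hYmem i)
  have hSmean : ∫ ω', S ω' ∂Q = n * p1 := by
    simp only [hSapp]
    rw [integral_finset_sum _ (fun i _ => (hYmem i).integrable one_le_two)]
    have : ∀ i ∈ Finset.range n, ∫ ω', Y i ω' ∂Q = p1 := by
      intro i _
      rw [(hid i).integral_eq, hmean1]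
    rw [Finset.sum_congr rfl this]
    simp [mul_comm]
  have hSvar : variance S Q = n * V := by
    rw [hSdef]
    have : variance (∑ i ∈ Finset.range n, Y i) Q = ∑ i ∈ Finset.range n, variance (Y i) Q := by
      apply IndepFun.variance_sum (fun i _ => hYmem i)
      intro i _ j _ hij
      exact (hindep.comp (fun _ => f) (fun _ => hf)).indepFun hij
    rw [this]
    have : ∀ i ∈ Finset.range n, variance (Y i) Q = V := fun i _ => (hid i).variance_eq
    rw [Finset.sum_congr rfl this]
    simp [mul_comm]
  -- the bad event where some sample hits A2
  set B : Set Ω' := {ω' | ∀ i ∈ Finset.range n, X i ω' ∉ A2} with hBdef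
  have hBc : Bᶜ ⊆ ⋃ i ∈ Finset.range n, (X i) ⁻¹' A2 := by
    intro ω' hω'
    simp only [hBdef, mem_compl_iff, mem_setOf_eq, not_forall] at hω'
    obtain ⟨i, hi, hmem⟩ := hω'
    simp only [mem_iUnion]
    exact ⟨i, hi, not_not.mp hmem⟩
  have hQBc : Q Bᶜ ≤ ENNReal.ofReal ((n : ℝ) * tp2) := by
    calc Q Bᶜ ≤ Q (⋃ i ∈ Finset.range n, (X i) ⁻¹' A2) := measure_mono hBc
      _ ≤ ∑ i ∈ Finset.range n, Q ((X i) ⁻¹' A2) := measure_biUnion_finset_le _ _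
      _ = ∑ i ∈ Finset.range n, tP A2 := by
          refine Finset.sum_congr rfl fun i _ => ?_
          rw [← hXlaw i, Measure.map_apply (hXmeas i) hA2]
      _ = (n : ℕ) • tP A2 := by rw [Finset.sum_const, Finset.card_range]
      _ = ENNReal.ofReal ((n : ℝ) * tp2) := by
          rw [nsmul_eq_mul, htp2, ENNReal.ofReal_mul (by positivity),
            ENNReal.ofReal_toReal (measure_ne_top tP A2), ENNReal.ofReal_natCast]
  -- the target set
  set T : Set Ω' := {ω' | |(∑ i ∈ Finset.range n, Set.indicator (A1 ∪ A2) L (X i ω')) / (n : ℝ)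
          - (p1 + p2)| > (δ + p2 / (p1 + p2)) * (p1 + p2)} with hTdef
  -- on B, the estimator equals S / n
  have hTB : ∀ ω' ∈ T ∩ B, |S ω' / (n : ℝ) - p1| > δ * p1 := by
    intro ω' ⟨hT, hB⟩
    have hsum : (∑ i ∈ Finset.range n, Set.indicator (A1 ∪ A2) L (X i ω')) = S ω' := by
      rw [hSapp]
      refine Finset.sum_congr rfl fun i hi => ?_
      rw [Set.indicator_union_of_disjoint hdisj]
      have : g (X i ω') = 0 := Set.indicator_of_notMem (hB i hi) L
      show f (X i ω') + g (X i ω') = Y i ω'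
      rw [this, add_zero]
    rw [hTdef, Set.mem_setOf_eq, hsum] at hT
    have hδp : (δ + p2 / (p1 + p2)) * (p1 + p2) = δ * (p1 + p2) + p2 := by
      rw [add_mul, div_mul_cancel₀ _ hp.ne']
    rw [hδp] at hT
    have h1 : |S ω' / (n : ℝ) - p1| ≥ |S ω' / (n : ℝ) - (p1 + p2)| - p2 := by
      have := abs_sub_abs_le_abs_sub (S ω' / (n : ℝ) - (p1 + p2)) (-p2)
      rw [abs_neg, abs_of_nonneg hp2] at this
      have heq : S ω' / (n : ℝ) - (p1 + p2) - -p2 = S ω' / (n : ℝ) - p1 := by ring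
      rw [heq] at this
      linarith
    have h2 : δ * (p1 + p2) ≥ δ * p1 := by nlinarith
    linarith
  have hTBsub : T ∩ B ⊆ {ω' | (n : ℝ) * (δ * p1) ≤ |S ω' - ∫ ω', S ω' ∂Q|} := by
    intro ω' hω'
    have h := hTB ω' hω'
    rw [Set.mem_setOf_eq, hSmean]
    have hn' : (0 : ℝ) < n := Nat.cast_pos.mpr hn
    have heq : S ω' - (n : ℝ) * p1 = (n : ℝ) * (S ω' / (n : ℝ) - p1) := by
      field_simp
    rw [heq, abs_mul, abs_of_nonneg hn'.le]
    have : δ * p1 ≤ |S ω' / (n : ℝ) - p1| := le_of_lt (by linarith [h])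
    exact mul_le_mul_of_nonneg_left this hn'.le
  -- main bound on T ∩ B via Chebyshev or degenerate variance
  have hmain : Q (T ∩ B) ≤ ENNReal.ofReal (ε - n * tp2) := by
    rcases eq_or_lt_of_le hVnn with hV0 | hVpos
    · -- variance zero: S = n p1 a.s.
      have hδ0 : δ = 0 := by
        rw [hδdef, ← hV0]
        simp
      have hev : evariance f tP = 0 := by
        have hlt := hL2.evariance_lt_top
        have : (evariance f tP).toReal = 0 := by rw [← variance, ← hVdef, ← hV0]
        exact (ENNReal.toReal_eq_zero_iff _).mp this |>.resolve_right hlt.ne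
      have hae : f =ᵐ[tP] fun _ => p1 := by
        have := (evariance_eq_zero_iff hf.aemeasurable).mp hev
        rwa [hmean1] at this
      have haeY : ∀ i, Y i =ᵐ[Q] fun _ => p1 := by
        intro i
        have hnull : tP {ω | ¬ f ω = p1} = 0 := by
          simpa [Filter.EventuallyEq, ae_iff] using hae
        have hms : MeasurableSet {ω | ¬ f ω = p1} :=
          (hf (measurableSet_singleton p1)).compl
        have hQ0 : Q ((X i) ⁻¹' {ω | ¬ f ω = p1}) = 0 := by
          rw [← Measure.map_apply (hXmeas i) hms, hXlaw i]
          exact hnull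
        rw [Filter.EventuallyEq, ae_iff]
        exact hQ0
      have haeS : S =ᵐ[Q] fun _ => (n : ℝ) * p1 := by
        have : ∀ᵐ ω' ∂Q, ∀ i ∈ Finset.range n, Y i ω' = p1 :=
          (ae_ball_iff (Finset.range n).countable_toSet).mpr fun i _ => haeY i
        filter_upwards [this] with ω' hω'
        rw [hSapp, Finset.sum_congr rfl hω', Finset.sum_const, Finset.card_range, nsmul_eq_mul]
      have hsub0 : Q (T ∩ B) = 0 := by
        apply measure_mono_null (s := T ∩ B) (t := {ω' | S ω' ≠ (n : ℝ) * p1})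
        · intro ω' hω'
          have h := hTB ω' hω'
          rw [hδ0, zero_mul] at h
          simp only [Set.mem_setOf_eq]
          intro hSeq
          rw [hSeq] at h
          have hn' : (0 : ℝ) < n := Nat.cast_pos.mpr hn
          rw [show (n : ℝ) * p1 / (n : ℝ) - p1 = 0 by field_simp; ring] at h
          simp at h
        · have := haeS
          rw [Filter.EventuallyEq, ae_iff] at this
          exact this
      rw [hsub0]
      exact zero_le
    · -- positive variance: Chebyshev
      have hδpos : 0 < δ := by
        apply Real.sqrt_pos.mpr
        apply div_pos hVpos
        have hn' : (0 : ℝ) < n := Nat.cast_pos.mpr hn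
        positivity
      have hc : (0 : ℝ) < (n : ℝ) * (δ * p1) := by
        have hn' : (0 : ℝ) < n := Nat.cast_pos.mpr hn
        positivity
      have hcheb := meas_ge_le_variance_div_sq hSmem hc
      have hratio : variance S Q / ((n : ℝ) * (δ * p1)) ^ 2 = ε - n * tp2 := by
        rw [hSvar]
        have hδsq : δ ^ 2 = V / (n * p1 ^ 2 * (ε - n * tp2)) := by
          rw [hδdef, Real.sq_sqrt]
          have hn' : (0 : ℝ) < n := Nat.cast_pos.mpr hn
          positivity
        have hn' : (0 : ℝ) < n := Nat.cast_pos.mpr hn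
        rw [mul_pow, mul_pow, hδsq]
        field_simp
      calc Q (T ∩ B) ≤ Q {ω' | (n : ℝ) * (δ * p1) ≤ |S ω' - ∫ ω', S ω' ∂Q|} :=
            measure_mono hTBsub
        _ ≤ ENNReal.ofReal (variance S Q / ((n : ℝ) * (δ * p1)) ^ 2) := hcheb
        _ = ENNReal.ofReal (ε - n * tp2) := by rw [hratio]
  -- combine
  calc Q T ≤ Q ((T ∩ B) ∪ Bᶜ) := measure_mono (fun ω' hω' => by
        by_cases hB : ω' ∈ B
        · exact Or.inl ⟨hω', hB⟩
        · exact Or.inr hB)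
    _ ≤ Q (T ∩ B) + Q Bᶜ := measure_union_le _ _
    _ ≤ ENNReal.ofReal (ε - n * tp2) + ENNReal.ofReal ((n : ℝ) * tp2) :=
        add_le_add hmain hQBc
    _ = ENNReal.ofReal ε := by
        rw [← ENNReal.ofReal_add (by linarith) (by positivity)]
        ring_nf
end

section
/- Under the assumptions (i) $p_1/p \to 1$, (ii) $\widetilde{Var}(Z_1)/(n p_1^2) \to 0$ for some $n = n(\gamma)$ subexponential in $-\log p$, and (iii) $n \tilde p_2 \to 0$, the IS estimator $Z = I_{\mathcal A_\gamma} \frac{dP}{d\tilde P}$ is strongly probabilistically efficient: for every $\varepsilon > 0$, $\delta_\varepsilon(\hat p, p) \leq \sqrt{\frac{\widetilde{Var}(Z_1)}{n p_1^2 (\varepsilon - n\tilde p_2)}} + \frac{p_2}{p} \to 0$ as $\gamma \to \infty$. -/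
open MeasureTheory ProbabilityTheory Filter Set

open scoped ENNReal

lemma aux_key {Ω Ω' : Type*} [MeasurableSpace Ω] [MeasurableSpace Ω']
    (μ : Measure Ω) [IsProbabilityMeasure μ]
    (ν : Measure Ω') [IsProbabilityMeasure ν]
    (X : ℕ → Ω' → Ω) (hXmeas : ∀ i, Measurable (X i))
    (hindep : iIndepFun X ν)
    (hXlaw : ∀ i, ν.map (X i) = μ)
    (L : Ω → ℝ) (hL : Measurable L)
    (A1 A2 : Set Ω) (hA1 : MeasurableSet A1) (hA2 : MeasurableSet A2)
    (hdisj : Disjoint A1 A2)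
    (p1 p2 : ℝ) (hp1 : 0 < p1) (hp2 : 0 ≤ p2)
    (hmean1 : ∫ ω, Set.indicator A1 L ω ∂μ = p1)
    (hL2 : MemLp (Set.indicator A1 L) 2 μ)
    (n : ℕ) (hn : 0 < n) (ε δ : ℝ) (hε : 0 < ε)
    (hq : (n : ℝ) * (μ A2).toReal < ε)
    (hδ : Real.sqrt (variance (Set.indicator A1 L) μ /
        (n * p1 ^ 2 * (ε - n * (μ A2).toReal))) + p2 / (p1 + p2) < δ) :
    ν {ω' | |(∑ i ∈ Finset.range n, Set.indicator (A1 ∪ A2) L (X i ω')) / (n : ℝ)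
        - (p1 + p2)| > δ * (p1 + p2)} ≤ ENNReal.ofReal ε := by
  have hnpos : (0 : ℝ) < n := Nat.cast_pos.2 hn
  set f := Set.indicator A1 L with hf_def
  set V := variance f μ with hV_def
  set q := (μ A2).toReal with hq_def
  set p := p1 + p2 with hp_def
  have hp : 0 < p := by positivity
  have hqn : 0 ≤ q := ENNReal.toReal_nonneg
  have hεq : 0 < ε - n * q := by linarith
  have hV : 0 ≤ V := variance_nonneg _ _
  set s := Real.sqrt (V / (n * p1 ^ 2 * (ε - n * q))) with hs_def
  have hs : 0 ≤ s := Real.sqrt_nonneg _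
  set t := δ * p - p2 with ht_def
  have hsp : s * p < t := by
    have h1 : (s + p2 / p) * p = s * p + p2 := by field_simp
    nlinarith [mul_lt_mul_of_pos_right hδ hp]
  have ht : 0 < t := lt_of_le_of_lt (by positivity) hsp
  have hf : Measurable f := hL.indicator hA1
  -- facts about Y i = f ∘ X i
  have hYmem : ∀ i, MemLp (fun ω' => f (X i ω')) 2 ν := by
    intro i
    have h := hL2
    rw [← hXlaw i] at h
    exact (memLp_map_measure_iff hf.aestronglyMeasurable (hXmeas i).aemeasurable).1 h
  have hYint : ∀ i, ∫ ω', f (X i ω') ∂ν = p1 := by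
    intro i
    rw [← hmean1, ← hXlaw i]
    exact (integral_map (hXmeas i).aemeasurable hf.aestronglyMeasurable).symm
  have hYvar : ∀ i, variance (fun ω' => f (X i ω')) ν = V := by
    intro i
    have h1 : ∫ ω', ((fun ω' => f (X i ω')) ^ 2) ω' ∂ν = ∫ ω, (f ^ 2) ω ∂μ := by
      simp only [Pi.pow_apply]
      rw [← hXlaw i]
      exact (integral_map (hXmeas i).aemeasurable
        ((hf.pow_const 2).aestronglyMeasurable)).symm
    have h2 : ∫ ω', (fun ω' => f (X i ω')) ω' ∂ν = ∫ ω, f ω ∂μ := by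
      simp only
      rw [← hXlaw i]
      exact (integral_map (hXmeas i).aemeasurable hf.aestronglyMeasurable).symm
    rw [hV_def, variance_eq_sub (hYmem i), variance_eq_sub hL2, h1, h2]
  have hYindep : iIndepFun (fun i => fun ω' => f (X i ω')) ν :=
    hindep.comp (fun _ => f) (fun _ => hf)
  set S := fun ω' => ∑ i ∈ Finset.range n, f (X i ω') with hS_def
  have hSmem : MemLp S 2 ν := memLp_finset_sum _ (fun i _ => hYmem i)
  have hSmean : ∫ ω', S ω' ∂ν = n * p1 := by
    rw [hS_def]
    rw [integral_finset_sum _ (fun i _ => ((hYmem i).integrable one_le_two))]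
    simp [hYint]
  have hSvar : variance S ν = n * V := by
    have h := IndepFun.variance_sum (μ := ν) (X := fun i => fun ω' => f (X i ω'))
      (s := Finset.range n) (fun i _ => hYmem i)
      (fun i _ j _ hij => hYindep.indepFun hij)
    have h2 : S = ∑ i ∈ Finset.range n, (fun ω' => f (X i ω')) := by
      funext ω'; simp [hS_def]
    rw [h2, h]
    simp [hYvar]
  have hcheb := meas_ge_le_variance_div_sq (μ := ν) hSmem
    (c := n * t) (by positivity)
  rw [hSvar] at hcheb
  have hSm : ν[S] = (n : ℝ) * p1 := hSmean
  rw [hSm] at hcheb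
  -- union bound for the A2 part
  have hBad : ν (⋃ i ∈ Finset.range n, X i ⁻¹' A2) ≤ (n : ℝ≥0∞) * μ A2 := by
    refine le_trans (measure_biUnion_finset_le _ _) ?_
    have h1 : ∀ i, ν (X i ⁻¹' A2) = μ A2 := by
      intro i
      rw [← hXlaw i, Measure.map_apply (hXmeas i) hA2]
    simp [h1]
  -- event inclusion
  have hsub : {ω' | |(∑ i ∈ Finset.range n, Set.indicator (A1 ∪ A2) L (X i ω')) / (n : ℝ)
        - p| > δ * p} ⊆
      (⋃ i ∈ Finset.range n, X i ⁻¹' A2) ∪ {ω' | (n : ℝ) * t ≤ |S ω' - n * p1|} := by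
    intro ω' hω'
    by_cases hb : ω' ∈ ⋃ i ∈ Finset.range n, X i ⁻¹' A2
    · exact Or.inl hb
    · refine Or.inr ?_
      have hnotin : ∀ i ∈ Finset.range n, X i ω' ∉ A2 := by
        intro i hi hmem
        exact hb (Set.mem_biUnion hi hmem)
      have hsum : (∑ i ∈ Finset.range n, Set.indicator (A1 ∪ A2) L (X i ω')) = S ω' := by
        refine Finset.sum_congr rfl (fun i hi => ?_)
        rw [Set.indicator_union_of_disjoint hdisj]
        show A1.indicator L (X i ω') + A2.indicator L (X i ω') = f (X i ω')
        rw [Set.indicator_of_notMem (hnotin i hi), add_zero]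
      simp only [Set.mem_setOf_eq] at hω' ⊢
      rw [hsum] at hω'
      have h4 : |p1 - p| = p2 := by
        rw [show p1 - p = -p2 by rw [hp_def]; ring, abs_neg, abs_of_nonneg hp2]
      have h3 : |S ω' / n - p| ≤ |S ω' / n - p1| + |p1 - p| := abs_sub_le _ _ _
      have habs : t < |S ω' / n - p1| := by
        rw [ht_def]; rw [h4] at h3; linarith
      have h5 : S ω' - n * p1 = n * (S ω' / n - p1) := by field_simp
      rw [h5, abs_mul, abs_of_nonneg (le_of_lt hnpos)]
      exact mul_le_mul_of_nonneg_left habs.le (le_of_lt hnpos)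
  -- put everything together
  have hμA2 : (n : ℝ≥0∞) * μ A2 = ENNReal.ofReal ((n : ℝ) * q) := by
    rw [ENNReal.ofReal_mul (Nat.cast_nonneg n), ENNReal.ofReal_natCast,
      hq_def, ENNReal.ofReal_toReal (measure_ne_top μ _)]
  have hcheb_term : (n : ℝ) * V / ((n : ℝ) * t) ^ 2 = V / (n * t ^ 2) := by
    field_simp
  have hreal : (n : ℝ) * q + V / (n * t ^ 2) ≤ ε := by
    have hssq : s ^ 2 = V / (n * p1 ^ 2 * (ε - n * q)) :=
      Real.sq_sqrt (by positivity)
    have hVeq : V = s ^ 2 * ((n : ℝ) * p1 ^ 2 * (ε - n * q)) := by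
      rw [hssq]; field_simp
    have h7 : s * p1 ≤ t := by nlinarith
    have h8 : (s * p1) ^ 2 ≤ t ^ 2 := by
      apply pow_le_pow_left₀ (by positivity) h7
    have h9 : V / (n * t ^ 2) ≤ ε - n * q := by
      rw [div_le_iff₀ (by positivity)]
      calc V = (s * p1) ^ 2 * (n * (ε - n * q)) := by rw [hVeq]; ring
        _ ≤ t ^ 2 * (n * (ε - n * q)) :=
            mul_le_mul_of_nonneg_right h8 (by positivity)
        _ = (ε - n * q) * (n * t ^ 2) := by ring
    linarith
  calc ν {ω' | |(∑ i ∈ Finset.range n, Set.indicator (A1 ∪ A2) L (X i ω')) / (n : ℝ)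
        - p| > δ * p}
      ≤ ν ((⋃ i ∈ Finset.range n, X i ⁻¹' A2) ∪ {ω' | (n : ℝ) * t ≤ |S ω' - n * p1|}) :=
        measure_mono hsub
    _ ≤ ν (⋃ i ∈ Finset.range n, X i ⁻¹' A2) + ν {ω' | (n : ℝ) * t ≤ |S ω' - n * p1|} :=
        measure_union_le _ _
    _ ≤ (n : ℝ≥0∞) * μ A2 + ENNReal.ofReal ((n : ℝ) * V / ((n : ℝ) * t) ^ 2) :=
        add_le_add hBad hcheb
    _ = ENNReal.ofReal ((n : ℝ) * q + V / (n * t ^ 2)) := by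
        rw [hμA2, hcheb_term, ENNReal.ofReal_add (by positivity)
          (by positivity)]
    _ ≤ ENNReal.ofReal ε := ENNReal.ofReal_le_ofReal hreal

/-- achieving strong probabilistic efficiency with a partial
decomposition `𝒜_γ = 𝒜¹_γ ∪ 𝒜²_γ` (disjoint). Under (i) `p₁/p → 1`,
(ii) `Var(Z₁)/(n p₁²) → 0` for an `n(γ)` subexponential in `-log p`, and
(iii) `n p̃₂ → 0`, for every `ε > 0` the minimal relative discrepancy satisfies
`δ_ε(p̂,p) ≤ √(Var(Z₁)/(n p₁² (ε - n p̃₂))) + p₂/p → 0`, so the IS estimator is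
strongly probabilistically efficient. -/
theorem strong_probabilistic_efficiency_partial_dominating_points
    {Ω Ω' : Type*} [MeasurableSpace Ω] [MeasurableSpace Ω']
    (tP : ℝ → Measure Ω) [∀ γ, IsProbabilityMeasure (tP γ)]
    (Q : ℝ → Measure Ω') [∀ γ, IsProbabilityMeasure (Q γ)]
    (X : ℝ → ℕ → Ω' → Ω) (hXmeas : ∀ γ i, Measurable (X γ i))
    (hindep : ∀ γ, iIndepFun (X γ) (Q γ))
    (hXlaw : ∀ γ i, (Q γ).map (X γ i) = tP γ)
    (L : ℝ → Ω → ℝ) (hL : ∀ γ, Measurable (L γ)) (hLnn : ∀ γ ω, 0 ≤ L γ ω)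
    (A1 A2 : ℝ → Set Ω) (hA1 : ∀ γ, MeasurableSet (A1 γ))
    (hA2 : ∀ γ, MeasurableSet (A2 γ)) (hdisj : ∀ γ, Disjoint (A1 γ) (A2 γ))
    (p1 p2 : ℝ → ℝ) (hp1 : ∀ γ, 0 < p1 γ) (hp2 : ∀ γ, 0 ≤ p2 γ)
    (hmean1 : ∀ γ, ∫ ω, Set.indicator (A1 γ) (L γ) ω ∂(tP γ) = p1 γ)
    (hmean2 : ∀ γ, ∫ ω, Set.indicator (A2 γ) (L γ) ω ∂(tP γ) = p2 γ)
    (hL2 : ∀ γ, MemLp (Set.indicator (A1 γ) (L γ)) 2 (tP γ))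
    (n : ℝ → ℕ) (hn : ∀ γ, 0 < n γ)
    (hp0 : Tendsto (fun γ => p1 γ + p2 γ) atTop (nhds 0))
    (hratio : Tendsto (fun γ => p1 γ / (p1 γ + p2 γ)) atTop (nhds 1))
    (hsubexp : Tendsto (fun γ => Real.log (n γ) /
        (-Real.log (p1 γ + p2 γ))) atTop (nhds 0))
    (hvar : Tendsto (fun γ =>
        variance (Set.indicator (A1 γ) (L γ)) (tP γ) / (n γ * (p1 γ) ^ 2))
      atTop (nhds 0))
    (htp2 : Tendsto (fun γ => (n γ : ℝ) * (tP γ (A2 γ)).toReal) atTop (nhds 0)) :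
    ∀ ε : ℝ, 0 < ε →
      (∀ᶠ γ in atTop,
        sInf {δ : ℝ | 0 < δ ∧
            Q γ {ω' | |(∑ i ∈ Finset.range (n γ),
                  Set.indicator (A1 γ ∪ A2 γ) (L γ) (X γ i ω')) / (n γ : ℝ)
                - (p1 γ + p2 γ)| > δ * (p1 γ + p2 γ)} ≤ ENNReal.ofReal ε}
          ≤ Real.sqrt (variance (Set.indicator (A1 γ) (L γ)) (tP γ) /
              (n γ * (p1 γ) ^ 2 * (ε - n γ * (tP γ (A2 γ)).toReal)))
            + p2 γ / (p1 γ + p2 γ)) ∧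
      Tendsto (fun γ =>
          Real.sqrt (variance (Set.indicator (A1 γ) (L γ)) (tP γ) /
              (n γ * (p1 γ) ^ 2 * (ε - n γ * (tP γ (A2 γ)).toReal)))
            + p2 γ / (p1 γ + p2 γ)) atTop (nhds 0) ∧
      Tendsto (fun γ =>
          sInf {δ : ℝ | 0 < δ ∧
              Q γ {ω' | |(∑ i ∈ Finset.range (n γ),
                    Set.indicator (A1 γ ∪ A2 γ) (L γ) (X γ i ω')) / (n γ : ℝ)
                  - (p1 γ + p2 γ)| > δ * (p1 γ + p2 γ)} ≤ ENNReal.ofReal ε})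
        atTop (nhds 0) := by

  intro ε hε
  have hp : ∀ γ, 0 < p1 γ + p2 γ := fun γ => by
    have := hp1 γ; have := hp2 γ; linarith
  have hBnn : ∀ γ, 0 ≤ Real.sqrt (variance (Set.indicator (A1 γ) (L γ)) (tP γ) /
      (n γ * (p1 γ) ^ 2 * (ε - n γ * (tP γ (A2 γ)).toReal)))
      + p2 γ / (p1 γ + p2 γ) := fun γ =>
    add_nonneg (Real.sqrt_nonneg _) (div_nonneg (hp2 γ) (hp γ).le)
  have hev : ∀ᶠ γ in atTop, (n γ : ℝ) * (tP γ (A2 γ)).toReal < ε :=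
    htp2.eventually_lt_const hε
  have part1 : ∀ᶠ γ in atTop,
      sInf {δ : ℝ | 0 < δ ∧
          Q γ {ω' | |(∑ i ∈ Finset.range (n γ),
                Set.indicator (A1 γ ∪ A2 γ) (L γ) (X γ i ω')) / (n γ : ℝ)
              - (p1 γ + p2 γ)| > δ * (p1 γ + p2 γ)} ≤ ENNReal.ofReal ε}
        ≤ Real.sqrt (variance (Set.indicator (A1 γ) (L γ)) (tP γ) /
            (n γ * (p1 γ) ^ 2 * (ε - n γ * (tP γ (A2 γ)).toReal)))
          + p2 γ / (p1 γ + p2 γ) := by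
    filter_upwards [hev] with γ hγ
    by_contra hcon
    push_neg at hcon
    obtain ⟨c, hc1, hc2⟩ := exists_between hcon
    have hmem : c ∈ {δ : ℝ | 0 < δ ∧
        Q γ {ω' | |(∑ i ∈ Finset.range (n γ),
              Set.indicator (A1 γ ∪ A2 γ) (L γ) (X γ i ω')) / (n γ : ℝ)
            - (p1 γ + p2 γ)| > δ * (p1 γ + p2 γ)} ≤ ENNReal.ofReal ε} :=
      ⟨lt_of_le_of_lt (hBnn γ) hc1,
        aux_key (tP γ) (Q γ) (X γ) (hXmeas γ) (hindep γ) (hXlaw γ) (L γ) (hL γ)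
          (A1 γ) (A2 γ) (hA1 γ) (hA2 γ) (hdisj γ) (p1 γ) (p2 γ) (hp1 γ) (hp2 γ)
          (hmean1 γ) (hL2 γ) (n γ) (hn γ) ε c hε hγ hc1⟩
    exact absurd (csInf_le ⟨0, fun x hx => hx.1.le⟩ hmem) (not_le.2 hc2)
  have part2 : Tendsto (fun γ =>
      Real.sqrt (variance (Set.indicator (A1 γ) (L γ)) (tP γ) /
          (n γ * (p1 γ) ^ 2 * (ε - n γ * (tP γ (A2 γ)).toReal)))
        + p2 γ / (p1 γ + p2 γ)) atTop (nhds 0) := by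
    have h1 : Tendsto (fun γ => ε - (n γ : ℝ) * (tP γ (A2 γ)).toReal) atTop (nhds ε) := by
      simpa using (tendsto_const_nhds (x := ε) (f := atTop)).sub htp2
    have h2 : Tendsto (fun γ => variance (Set.indicator (A1 γ) (L γ)) (tP γ) /
        (n γ * (p1 γ) ^ 2) / (ε - n γ * (tP γ (A2 γ)).toReal)) atTop (nhds (0 / ε)) :=
      hvar.div h1 (ne_of_gt hε)
    rw [zero_div] at h2
    have h3 : Tendsto (fun γ =>
        Real.sqrt (variance (Set.indicator (A1 γ) (L γ)) (tP γ) /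
          (n γ * (p1 γ) ^ 2 * (ε - n γ * (tP γ (A2 γ)).toReal)))) atTop (nhds 0) := by
      have h6 := (Real.continuous_sqrt.tendsto' 0 0 Real.sqrt_zero).comp h2
      exact h6.congr (fun γ => by
        simp only [Function.comp_apply]
        rw [div_div])
    have h4 : Tendsto (fun γ => p2 γ / (p1 γ + p2 γ)) atTop (nhds 0) := by
      have heq : ∀ γ, p2 γ / (p1 γ + p2 γ) = 1 - p1 γ / (p1 γ + p2 γ) := fun γ => by
        rw [eq_sub_iff_add_eq, ← add_div, add_comm (p2 γ), div_self (hp γ).ne']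
      have h5 : Tendsto (fun γ => 1 - p1 γ / (p1 γ + p2 γ)) atTop (nhds (1 - 1)) :=
        tendsto_const_nhds.sub hratio
      rw [sub_self] at h5
      exact h5.congr (fun γ => (heq γ).symm)
    simpa using h3.add h4
  refine ⟨part1, part2, ?_⟩
  refine tendsto_of_tendsto_of_tendsto_of_le_of_le' tendsto_const_nhds part2 ?_ part1
  filter_upwards with γ
  exact Real.sInf_nonneg (fun x hx => hx.1.le)
end

section
/- Under the assumptions (i) $\liminf_{\gamma\to\infty} p_1/p = c$ for some $0 < c \leq 1$, (ii) $\widetilde{Var}(Z_1)/(n p_1^2) \to 0$ for some $n = n(\gamma)$ subexponential in $-\log p$, and (iii) $n \tilde p_2 \to 0$, one has $\limsup_{\gamma\to\infty} \delta_\varepsilon(\hat p, p) \leq 1 - c < 1$ for every $\varepsilon > 0$, so the IS estimator is weakly probabilistically efficient. -/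
open MeasureTheory ProbabilityTheory Filter Set

lemma weak_eff_aux {Ω Ω' : Type*} [MeasurableSpace Ω] [MeasurableSpace Ω']
    (tP : Measure Ω) [IsProbabilityMeasure tP] (Q : Measure Ω') [IsProbabilityMeasure Q]
    (X : ℕ → Ω' → Ω) (hXmeas : ∀ i, Measurable (X i))
    (hindep : iIndepFun X Q)
    (hXlaw : ∀ i, Q.map (X i) = tP)
    (L : Ω → ℝ) (hL : Measurable L)
    (A1 A2 : Set Ω) (hA1 : MeasurableSet A1) (hA2 : MeasurableSet A2)
    (p1 p2 : ℝ) (hp1 : 0 < p1) (hp2 : 0 ≤ p2)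
    (hmean1 : ∫ ω, Set.indicator A1 L ω ∂tP = p1)
    (hL2 : MemLp (Set.indicator A1 L) 2 tP)
    (n : ℕ) (hn : 0 < n) (θ : ℝ) (hθ : 0 < θ) (b : ℝ)
    (hbP : θ * p1 + p2 ≤ b * (p1 + p2)) (ε : ℝ)
    (h2 : variance (Set.indicator A1 L) tP / (n * p1 ^ 2) ≤ θ ^ 2 * (ε / 2))
    (h3 : (n : ℝ) * (tP A2).toReal ≤ ε / 2) :
    Q {ω' | |(∑ i ∈ Finset.range n,
        Set.indicator (A1 ∪ A2) L (X i ω')) / (n : ℝ) - (p1 + p2)| > b * (p1 + p2)}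
      ≤ ENNReal.ofReal ε := by
  have hε2 : (0 : ℝ) ≤ ε / 2 := le_trans (by positivity) h3
  set Z1 := Set.indicator A1 L with hZ1
  have hZ1meas : Measurable Z1 := hL.indicator hA1
  set Y : ℕ → Ω' → ℝ := fun i ω' => Z1 (X i ω') with hY
  have hnR : (0 : ℝ) < n := by exact_mod_cast hn
  -- basic transfer lemma
  have hint : ∀ (i : ℕ) (g : Ω → ℝ), Measurable g →
      ∫ ω', g (X i ω') ∂Q = ∫ ω, g ω ∂tP := by
    intro i g hg
    rw [← hXlaw i, integral_map (hXmeas i).aemeasurable hg.aestronglyMeasurable]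
  have hYmem : ∀ i, MemLp (Y i) 2 Q := by
    intro i
    have h := hL2
    rw [← hXlaw i] at h
    exact (memLp_map_measure_iff hZ1meas.aestronglyMeasurable
      (hXmeas i).aemeasurable).mp h
  have hYint : ∀ i, ∫ ω', Y i ω' ∂Q = p1 := fun i => by
    rw [hint i Z1 hZ1meas]; exact hmean1
  have hYvar : ∀ i, variance (Y i) Q = variance Z1 tP := by
    intro i
    rw [variance_eq_sub (hYmem i), variance_eq_sub hL2]
    have h1 : ∫ ω', (Y i ^ 2) ω' ∂Q = ∫ ω, (Z1 ^ 2) ω ∂tP := by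
      have := hint i (Z1 ^ 2) (hZ1meas.pow_const 2)
      simpa using this
    rw [h1, hYint i, hmean1]
  -- the sum
  set SY : Ω' → ℝ := ∑ i ∈ Finset.range n, Y i with hSY
  have hSYmem : MemLp SY 2 Q := memLp_finset_sum' _ fun i _ => hYmem i
  have hSYint : ∫ ω', SY ω' ∂Q = (n : ℝ) * p1 := by
    simp only [hSY, Finset.sum_apply]
    rw [integral_finset_sum _ fun i _ => (hYmem i).integrable one_le_two]
    simp [hYint]
  have hYindep : iIndepFun Y Q :=
    hindep.comp (fun _ => Z1) fun _ => hZ1meas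
  have hSYvar : variance SY Q = (n : ℝ) * variance Z1 tP := by
    rw [hSY, IndepFun.variance_sum (fun i _ => hYmem i)
      (fun i _ j _ hij => hYindep.indepFun hij)]
    simp [hYvar, Finset.sum_const, nsmul_eq_mul]
  have hcpos : (0 : ℝ) < θ * ((n : ℝ) * p1) := by positivity
  have hcheb := meas_ge_le_variance_div_sq (μ := Q) hSYmem hcpos
  -- bound the Chebyshev RHS
  have hVle : variance Z1 tP ≤ θ ^ 2 * (ε / 2) * ((n : ℝ) * p1 ^ 2) := by
    rw [div_le_iff₀ (by positivity)] at h2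
    linarith
  have hrhs : variance SY Q / (θ * ((n : ℝ) * p1)) ^ 2 ≤ ε / 2 := by
    rw [hSYvar, div_le_iff₀ (by positivity)]
    calc (n : ℝ) * variance Z1 tP
        ≤ (n : ℝ) * (θ ^ 2 * (ε / 2) * ((n : ℝ) * p1 ^ 2)) := by
          exact mul_le_mul_of_nonneg_left hVle (le_of_lt hnR)
      _ = ε / 2 * (θ * ((n : ℝ) * p1)) ^ 2 := by ring
  have hcheb' : Q {ω' | θ * ((n : ℝ) * p1) ≤ |SY ω' - ∫ ω', SY ω' ∂Q|}
      ≤ ENNReal.ofReal (ε / 2) :=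
    le_trans hcheb (ENNReal.ofReal_le_ofReal hrhs)
  -- the A2 event
  set E2 : Set Ω' := (⋃ i ∈ Finset.range n, X i ⁻¹' A2) with hE2def
  have hE2bound : Q E2 ≤ ENNReal.ofReal (ε / 2) := by
    have hle : Q E2 ≤ ∑ i ∈ Finset.range n, Q (X i ⁻¹' A2) :=
      measure_biUnion_finset_le _ _
    have heq : ∀ i ∈ Finset.range n, Q (X i ⁻¹' A2) = tP A2 := fun i _ => by
      rw [← hXlaw i, Measure.map_apply (hXmeas i) hA2]
    rw [Finset.sum_congr rfl heq, Finset.sum_const, Finset.card_range] at hle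
    calc Q E2 ≤ (n : ENNReal) * tP A2 := by simpa [nsmul_eq_mul] using hle
      _ = ENNReal.ofReal ((n : ℝ) * (tP A2).toReal) := by
          rw [ENNReal.ofReal_mul (Nat.cast_nonneg n),
            ENNReal.ofReal_toReal (measure_ne_top _ _), ENNReal.ofReal_natCast]
      _ ≤ ENNReal.ofReal (ε / 2) := ENNReal.ofReal_le_ofReal h3
  -- event inclusion
  have hsub : {ω' | |(∑ i ∈ Finset.range n,
        Set.indicator (A1 ∪ A2) L (X i ω')) / (n : ℝ) - (p1 + p2)| > b * (p1 + p2)}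
      ⊆ {ω' | θ * ((n : ℝ) * p1) ≤ |SY ω' - ∫ ω', SY ω' ∂Q|} ∪ E2 := by
    intro ω' hω'
    by_cases hE2 : ω' ∈ E2
    · exact Or.inr hE2
    left
    have hXA2 : ∀ i ∈ Finset.range n, X i ω' ∉ A2 := by
      intro i hi hmem
      exact hE2 (Set.mem_biUnion hi hmem)
    have hsumeq : ∑ i ∈ Finset.range n, Set.indicator (A1 ∪ A2) L (X i ω')
        = SY ω' := by
      rw [hSY, Finset.sum_apply]
      refine Finset.sum_congr rfl fun i hi => ?_
      by_cases hx : X i ω' ∈ A1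
      · rw [Set.indicator_of_mem (Set.mem_union_left _ hx)]
        simp only [hY, hZ1, Set.indicator_of_mem hx]
      · rw [Set.indicator_of_notMem (fun h => h.elim hx (hXA2 i hi))]
        simp only [hY, hZ1, Set.indicator_of_notMem hx]
    have h5 : b * (p1 + p2) < |SY ω' / (n : ℝ) - (p1 + p2)| := by
      have := hω'
      simp only [Set.mem_setOf_eq] at this
      rwa [hsumeq] at this
    have htri : |SY ω' / (n : ℝ) - (p1 + p2)| ≤ |SY ω' / (n : ℝ) - p1| + p2 := by
      have := abs_add_le (SY ω' / (n : ℝ) - p1) (-p2)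
      have habs : |(-p2)| = p2 := by rw [abs_neg, abs_of_nonneg hp2]
      calc |SY ω' / (n : ℝ) - (p1 + p2)|
          = |(SY ω' / (n : ℝ) - p1) + (-p2)| := by ring_nf
        _ ≤ |SY ω' / (n : ℝ) - p1| + |(-p2)| := abs_add_le _ _
        _ = |SY ω' / (n : ℝ) - p1| + p2 := by rw [habs]
    have h6 : θ * p1 ≤ |SY ω' / (n : ℝ) - p1| := by linarith
    simp only [Set.mem_setOf_eq]
    rw [hSYint]
    have heq2 : |SY ω' - (n : ℝ) * p1| = (n : ℝ) * |SY ω' / (n : ℝ) - p1| := by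
      rw [← abs_of_pos hnR, ← abs_mul]
      congr 1
      field_simp
      rw [abs_of_pos hnR]; ring
    rw [heq2, mul_comm θ ((n : ℝ) * p1)]
    calc (n : ℝ) * p1 * θ = (n : ℝ) * (θ * p1) := by ring
      _ ≤ (n : ℝ) * |SY ω' / (n : ℝ) - p1| :=
          mul_le_mul_of_nonneg_left h6 (le_of_lt hnR)
  calc Q _ ≤ Q ({ω' | θ * ((n : ℝ) * p1) ≤ |SY ω' - ∫ ω', SY ω' ∂Q|} ∪ E2) :=
        measure_mono hsub
    _ ≤ Q {ω' | θ * ((n : ℝ) * p1) ≤ |SY ω' - ∫ ω', SY ω' ∂Q|} + Q E2 :=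
        measure_union_le _ _
    _ ≤ ENNReal.ofReal (ε / 2) + ENNReal.ofReal (ε / 2) := add_le_add hcheb' hE2bound
    _ = ENNReal.ofReal ε := by
        rw [← ENNReal.ofReal_add hε2 hε2]; norm_num

/-- achieving weak probabilistic efficiency with a partial
decomposition `𝒜_γ = 𝒜¹_γ ∪ 𝒜²_γ` (disjoint). Under (i) `liminf p₁/p = c` with
`0 < c ≤ 1`, (ii) `Var(Z₁)/(n p₁²) → 0` for an `n(γ)` subexponential in `-log p`,
and (iii) `n p̃₂ → 0`, for every `ε > 0` we have `limsup δ_ε(p̂,p) ≤ 1 - c < 1`,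
so the IS estimator is weakly probabilistically efficient. -/
theorem weak_probabilistic_efficiency_partial_dominating_points
    {Ω Ω' : Type*} [MeasurableSpace Ω] [MeasurableSpace Ω']
    (tP : ℝ → Measure Ω) [∀ γ, IsProbabilityMeasure (tP γ)]
    (Q : ℝ → Measure Ω') [∀ γ, IsProbabilityMeasure (Q γ)]
    (X : ℝ → ℕ → Ω' → Ω) (hXmeas : ∀ γ i, Measurable (X γ i))
    (hindep : ∀ γ, iIndepFun (X γ) (Q γ))
    (hXlaw : ∀ γ i, (Q γ).map (X γ i) = tP γ)
    (L : ℝ → Ω → ℝ) (hL : ∀ γ, Measurable (L γ)) (hLnn : ∀ γ ω, 0 ≤ L γ ω)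
    (A1 A2 : ℝ → Set Ω) (hA1 : ∀ γ, MeasurableSet (A1 γ))
    (hA2 : ∀ γ, MeasurableSet (A2 γ)) (hdisj : ∀ γ, Disjoint (A1 γ) (A2 γ))
    (p1 p2 : ℝ → ℝ) (hp1 : ∀ γ, 0 < p1 γ) (hp2 : ∀ γ, 0 ≤ p2 γ)
    (hmean1 : ∀ γ, ∫ ω, Set.indicator (A1 γ) (L γ) ω ∂(tP γ) = p1 γ)
    (hmean2 : ∀ γ, ∫ ω, Set.indicator (A2 γ) (L γ) ω ∂(tP γ) = p2 γ)
    (hL2 : ∀ γ, MemLp (Set.indicator (A1 γ) (L γ)) 2 (tP γ))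
    (n : ℝ → ℕ) (hn : ∀ γ, 0 < n γ)
    (hp0 : Tendsto (fun γ => p1 γ + p2 γ) atTop (nhds 0))
    (c : ℝ) (hc0 : 0 < c) (hc1 : c ≤ 1)
    (hliminf : Filter.liminf (fun γ => p1 γ / (p1 γ + p2 γ)) atTop = c)
    (hsubexp : Tendsto (fun γ => Real.log (n γ) /
        (-Real.log (p1 γ + p2 γ))) atTop (nhds 0))
    (hvar : Tendsto (fun γ =>
        variance (Set.indicator (A1 γ) (L γ)) (tP γ) / (n γ * (p1 γ) ^ 2))
      atTop (nhds 0))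
    (htp2 : Tendsto (fun γ => (n γ : ℝ) * (tP γ (A2 γ)).toReal) atTop (nhds 0)) :
    ∀ ε : ℝ, 0 < ε →
      Filter.limsup (fun γ =>
          sInf {δ : ℝ | 0 < δ ∧
              Q γ {ω' | |(∑ i ∈ Finset.range (n γ),
                    Set.indicator (A1 γ ∪ A2 γ) (L γ) (X γ i ω')) / (n γ : ℝ)
                  - (p1 γ + p2 γ)| > δ * (p1 γ + p2 γ)} ≤ ENNReal.ofReal ε})
        atTop ≤ 1 - c ∧ (1 - c : ℝ) < 1 := by
  intro ε hε
  refine ⟨?_, by linarith⟩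
  set F : ℝ → ℝ := fun γ => sInf {δ : ℝ | 0 < δ ∧
      Q γ {ω' | |(∑ i ∈ Finset.range (n γ),
            Set.indicator (A1 γ ∪ A2 γ) (L γ) (X γ i ω')) / (n γ : ℝ)
          - (p1 γ + p2 γ)| > δ * (p1 γ + p2 γ)} ≤ ENNReal.ofReal ε} with hF
  have hPpos : ∀ γ, 0 < p1 γ + p2 γ := fun γ => by linarith [hp1 γ, hp2 γ]
  -- key eventual bound
  have key : ∀ b : ℝ, 1 - c < b → ∀ᶠ γ in atTop, F γ ≤ b := by
    intro b hb
    set d : ℝ := b - (1 - c) with hd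
    have hd0 : 0 < d := by simp [hd]; linarith
    set θ : ℝ := min d c / 2 with hθdef
    have hθ0 : 0 < θ := by positivity
    have hθd : 2 * θ ≤ d := by
      have : min d c ≤ d := min_le_left _ _
      simp [hθdef]; linarith
    have hθc : θ < c := by
      have : min d c ≤ c := min_le_right _ _
      simp [hθdef]; linarith
    have hθ1 : θ ≤ 1 := by linarith
    have hb0 : 0 < b := by linarith
    -- eventual facts
    have hbnd : IsBoundedUnder (· ≥ ·) atTop (fun γ => p1 γ / (p1 γ + p2 γ)) :=
      ⟨0, eventually_map.mpr (Eventually.of_forall fun γ => div_nonneg (hp1 γ).le (hPpos γ).le)⟩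
    have hev1 : ∀ᶠ γ in atTop, c - θ < p1 γ / (p1 γ + p2 γ) := by
      refine eventually_lt_of_lt_liminf ?_ hbnd
      rw [hliminf]; linarith
    have hev2 : ∀ᶠ γ in atTop,
        variance (Set.indicator (A1 γ) (L γ)) (tP γ) / (n γ * (p1 γ) ^ 2)
          ≤ θ ^ 2 * (ε / 2) := by
      have := hvar.eventually (ge_mem_nhds (show (0:ℝ) < θ ^ 2 * (ε / 2) by positivity))
      exact this
    have hev3 : ∀ᶠ γ in atTop, (n γ : ℝ) * (tP γ (A2 γ)).toReal ≤ ε / 2 := by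
      exact htp2.eventually (ge_mem_nhds (show (0:ℝ) < ε / 2 by positivity))
    filter_upwards [hev1, hev2, hev3] with γ h1 h2 h3
    -- show b is in the set, hence sInf ≤ b
    have hbP : θ * p1 γ + p2 γ ≤ b * (p1 γ + p2 γ) := by
      rcases le_or_gt 1 b with hb1 | hb1
      · nlinarith [hp1 γ, hp2 γ, hPpos γ]
      · -- b < 1
        have hfr : (c - θ) * (p1 γ + p2 γ) < p1 γ :=
          (lt_div_iff₀ (hPpos γ)).mp h1
        have h1m : (0 : ℝ) ≤ 1 - θ := by linarith
        have key2 : (1 - θ) * ((c - θ) * (p1 γ + p2 γ)) ≤ (1 - θ) * p1 γ :=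
          mul_le_mul_of_nonneg_left (le_of_lt hfr) h1m
        have hcd : c - d ≤ (1 - θ) * (c - θ) := by
          nlinarith [sq_nonneg θ, mul_le_mul_of_nonneg_left hc1 hθ0.le]
        have hfin : (1 - b) * (p1 γ + p2 γ) ≤ (1 - θ) * p1 γ := by
          have h5 := mul_le_mul_of_nonneg_right hcd (le_of_lt (hPpos γ))
          have hbe : (1 : ℝ) - b = c - d := by rw [hd]; ring
          rw [hbe]
          calc (c - d) * (p1 γ + p2 γ)
              ≤ ((1 - θ) * (c - θ)) * (p1 γ + p2 γ) := h5
            _ = (1 - θ) * ((c - θ) * (p1 γ + p2 γ)) := by ring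
            _ ≤ (1 - θ) * p1 γ := key2
        linarith [hfin]
    have hmem : b ∈ {δ : ℝ | 0 < δ ∧
        Q γ {ω' | |(∑ i ∈ Finset.range (n γ),
              Set.indicator (A1 γ ∪ A2 γ) (L γ) (X γ i ω')) / (n γ : ℝ)
            - (p1 γ + p2 γ)| > δ * (p1 γ + p2 γ)} ≤ ENNReal.ofReal ε} := by
      refine ⟨hb0, ?_⟩
      exact weak_eff_aux (tP γ) (Q γ) (X γ) (hXmeas γ) (hindep γ) (hXlaw γ)
        (L γ) (hL γ) (A1 γ) (A2 γ) (hA1 γ) (hA2 γ) (p1 γ) (p2 γ) (hp1 γ) (hp2 γ)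
        (hmean1 γ) (hL2 γ) (n γ) (hn γ) θ hθ0 b hbP ε h2 h3
    have hbdd : BddBelow {δ : ℝ | 0 < δ ∧
        Q γ {ω' | |(∑ i ∈ Finset.range (n γ),
              Set.indicator (A1 γ ∪ A2 γ) (L γ) (X γ i ω')) / (n γ : ℝ)
            - (p1 γ + p2 γ)| > δ * (p1 γ + p2 γ)} ≤ ENNReal.ofReal ε} :=
      ⟨0, fun x hx => le_of_lt hx.1⟩
    exact csInf_le hbdd hmem
  -- conclude about limsup
  by_contra hcon
  push_neg at hcon
  set b := ((1 - c) + limsup F atTop) / 2 with hbdef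
  have hb1 : 1 - c < b := by simp [hbdef]; linarith
  have hb2 : b < limsup F atTop := by simp [hbdef]; linarith
  have hev := key b hb1
  have hF0 : ∀ γ, 0 ≤ F γ := fun γ => Real.sInf_nonneg fun x hx => le_of_lt hx.1
  have : limsup F atTop ≤ b :=
    limsup_le_of_le (isCoboundedUnder_le_of_le atTop hF0) hev
  linarith
end

section
/- Consider $p = P(X \geq \gamma \text{ or } X \leq -k\gamma)$ with $X \sim N(0,1)$ and constant $k \geq 3$, estimated by IS with distribution $N(\gamma,1)$ and estimator $Z = I\{X \geq \gamma \text{ or } X \leq -k\gamma\} e^{-\gamma X + \gamma^2/2}$. Then $\tilde E(Z^2) = e^{\gamma^2}(\bar\Phi(2\gamma) + \bar\Phi((k-1)\gamma))$ and $\tilde E(Z^2)/p^2 = \Theta(\gamma)$ as $\gamma\to\infty$; hence $Z$ is asymptotically efficient despite missing the dominating point $-k\gamma$. -/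
open MeasureTheory Real Set Filter

/-- Second moment of the one-point IS estimator for `P(X ≥ γ or X ≤ -kγ)`
under the IS distribution `N(γ,1)`. -/
noncomputable def secondMoment (k γ : ℝ) : ℝ :=
  ∫ x in {x : ℝ | γ ≤ x ∨ x ≤ -k * γ},
    (Real.exp (-γ * x + γ ^ 2 / 2)) ^ 2 *
      ((Real.sqrt (2 * π))⁻¹ * Real.exp (-(x - γ) ^ 2 / 2))

noncomputable def gpdf (t : ℝ) : ℝ := (Real.sqrt (2 * π))⁻¹ * Real.exp (-t ^ 2 / 2)

lemma gpdf_pos (t : ℝ) : 0 < gpdf t := by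
  have h2π : (0:ℝ) < 2 * π := by positivity
  exact mul_pos (inv_pos.2 (Real.sqrt_pos.2 h2π)) (Real.exp_pos _)

lemma gpdf_integrable : Integrable gpdf := by
  have h : ∀ t : ℝ, -t ^ 2 / 2 = -(1/2 : ℝ) * t ^ 2 := by intro t; ring
  have := (integrable_exp_neg_mul_sq (by norm_num : (0:ℝ) < 1/2)).const_mul
    ((Real.sqrt (2 * π))⁻¹)
  unfold gpdf
  simp_rw [h]
  exact this

lemma gpdf_anti {s t : ℝ} (hs : 0 ≤ s) (hst : s ≤ t) : gpdf t ≤ gpdf s := by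
  unfold gpdf
  have : t ^ 2 ≥ s ^ 2 := by nlinarith
  have := Real.exp_le_exp.2 (by linarith : -t ^ 2 / 2 ≤ -s ^ 2 / 2)
  have h2π : (0:ℝ) < Real.sqrt (2 * π) := Real.sqrt_pos.2 (by positivity)
  exact mul_le_mul_of_nonneg_left this (by positivity)

lemma PhiBar_eq_Ioi (x : ℝ) : PhiBar x = ∫ t in Ioi x, gpdf t := by
  unfold PhiBar gpdf; exact integral_Ici_eq_integral_Ioi

lemma PhiBar_nonneg (x : ℝ) : 0 ≤ PhiBar x := by
  rw [PhiBar_eq_Ioi]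
  exact setIntegral_nonneg measurableSet_Ioi fun t _ => (gpdf_pos t).le

-- FTC: ∫ t in Ioi x, t * exp (-t^2/2) = exp (-x^2/2), for 0 < x, with integrability
lemma tail_ftc {x : ℝ} (hx : 0 < x) :
    (∫ t in Ioi x, t * Real.exp (-t ^ 2 / 2)) = Real.exp (-x ^ 2 / 2) ∧
    IntegrableOn (fun t => t * Real.exp (-t ^ 2 / 2)) (Ioi x) := by
  have hderiv : ∀ t ∈ Ici x, HasDerivAt (fun t : ℝ => -Real.exp (-t ^ 2 / 2))
      (t * Real.exp (-t ^ 2 / 2)) t := by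
    intro t _
    have h1 : HasDerivAt (fun t : ℝ => -t ^ 2 / 2) (-t) t := by
      have := ((hasDerivAt_pow 2 t).neg).div_const 2
      simpa using this.congr_deriv (by push_cast; ring)
    have := (h1.exp).neg
    exact this.congr_deriv (by ring)
  have hpos : ∀ t ∈ Ioi x, 0 ≤ t * Real.exp (-t ^ 2 / 2) := by
    intro t ht
    exact mul_nonneg (le_of_lt (lt_trans hx ht)) (Real.exp_pos _).le
  have htend : Tendsto (fun t : ℝ => -Real.exp (-t ^ 2 / 2)) atTop (nhds 0) := by
    rw [show (0:ℝ) = -0 by ring]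
    apply Tendsto.neg
    apply Real.tendsto_exp_atBot.comp
    have : Tendsto (fun t : ℝ => t ^ 2 / 2) atTop atTop :=
      (tendsto_pow_atTop two_ne_zero).atTop_div_const (by norm_num)
    simpa [neg_div] using tendsto_neg_atBot_iff.mpr this
  constructor
  · have := integral_Ioi_of_hasDerivAt_of_nonneg' hderiv hpos htend
    simpa using this
  · exact integrableOn_Ioi_deriv_of_nonneg' hderiv hpos htend

lemma PhiBar_le {x : ℝ} (hx : 0 < x) :
    PhiBar x ≤ (Real.sqrt (2 * π))⁻¹ * (Real.exp (-x ^ 2 / 2) / x) := by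
  obtain ⟨hval, hint⟩ := tail_ftc hx
  rw [PhiBar_eq_Ioi]
  have hint2 : IntegrableOn (fun t => (Real.sqrt (2 * π))⁻¹ * (t * Real.exp (-t ^ 2 / 2)) / x)
      (Ioi x) := ((hint.const_mul _).div_const _)
  have hmono : ∀ t ∈ Ioi x, gpdf t ≤
      (Real.sqrt (2 * π))⁻¹ * (t * Real.exp (-t ^ 2 / 2)) / x := by
    intro t ht
    have ht' : x ≤ t := le_of_lt ht
    have h1 : (1:ℝ) ≤ t / x := (one_le_div hx).2 ht'
    have : gpdf t * 1 ≤ gpdf t * (t / x) :=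
      mul_le_mul_of_nonneg_left h1 (gpdf_pos t).le
    calc gpdf t = gpdf t * 1 := (mul_one _).symm
      _ ≤ gpdf t * (t / x) := this
      _ = (Real.sqrt (2 * π))⁻¹ * (t * Real.exp (-t ^ 2 / 2)) / x := by
          unfold gpdf; field_simp
  calc (∫ t in Ioi x, gpdf t)
      ≤ ∫ t in Ioi x, (Real.sqrt (2 * π))⁻¹ * (t * Real.exp (-t ^ 2 / 2)) / x :=
        setIntegral_mono_on gpdf_integrable.integrableOn hint2 measurableSet_Ioi hmono
    _ = (Real.sqrt (2 * π))⁻¹ * (∫ t in Ioi x, t * Real.exp (-t ^ 2 / 2)) / x := by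
        rw [← integral_const_mul, ← integral_div]
    _ = (Real.sqrt (2 * π))⁻¹ * (Real.exp (-x ^ 2 / 2) / x) := by rw [hval]; ring

lemma PhiBar_ge {x : ℝ} (hx : 1 ≤ x) :
    (Real.sqrt (2 * π))⁻¹ * Real.exp (-(3:ℝ)/2) * (Real.exp (-x ^ 2 / 2) / x) ≤ PhiBar x := by
  have hx0 : 0 < x := lt_of_lt_of_le one_pos hx
  have hsub : Icc x (x + x⁻¹) ⊆ Ici x := fun t ht => ht.1
  have step1 : (∫ t in Icc x (x + x⁻¹), gpdf t) ≤ PhiBar x := by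
    unfold PhiBar
    rw [show (∫ t in Ici x, (Real.sqrt (2 * π))⁻¹ * Real.exp (-t ^ 2 / 2))
        = ∫ t in Ici x, gpdf t from rfl]
    exact setIntegral_mono_set gpdf_integrable.integrableOn
      (Eventually.of_forall fun t => (gpdf_pos t).le) (HasSubset.Subset.eventuallyLE hsub)
  refine le_trans ?_ step1
  have hconst : ∀ t ∈ Icc x (x + x⁻¹), gpdf (x + x⁻¹) ≤ gpdf t := fun t ht =>
    gpdf_anti (hx0.trans_le ht.1).le ht.2
  have step2 : (∫ _t in Icc x (x + x⁻¹), gpdf (x + x⁻¹)) ≤ ∫ t in Icc x (x + x⁻¹), gpdf t :=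
    setIntegral_mono_on (integrableOn_const measure_Icc_lt_top.ne)
      gpdf_integrable.integrableOn measurableSet_Icc hconst
  refine le_trans ?_ step2
  rw [setIntegral_const, measureReal_def, Real.volume_Icc]
  have hvol : (ENNReal.ofReal (x + x⁻¹ - x)).toReal = x⁻¹ := by
    rw [add_sub_cancel_left, ENNReal.toReal_ofReal (by positivity)]
  rw [hvol, smul_eq_mul]
  -- x⁻¹ * gpdf (x + x⁻¹) ≥ c * e^{-3/2} * (e^{-x²/2}/x)
  unfold gpdf
  have hexp : Real.exp (-(3:ℝ)/2) * Real.exp (-x ^ 2 / 2) ≤ Real.exp (-(x + x⁻¹) ^ 2 / 2) := by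
    rw [← Real.exp_add]
    apply Real.exp_le_exp.2
    have h1 : x⁻¹ ≤ 1 := inv_le_one_of_one_le₀ hx
    have h2 : (x + x⁻¹) ^ 2 = x ^ 2 + 2 + x⁻¹ ^ 2 := by
      field_simp; ring
    nlinarith [sq_nonneg x⁻¹]
  have hc : (0:ℝ) < (Real.sqrt (2 * π))⁻¹ := inv_pos.2 (Real.sqrt_pos.2 (by positivity))
  calc (Real.sqrt (2 * π))⁻¹ * Real.exp (-(3:ℝ)/2) * (Real.exp (-x ^ 2 / 2) / x)
      = (Real.sqrt (2 * π))⁻¹ * (Real.exp (-(3:ℝ)/2) * Real.exp (-x ^ 2 / 2)) * x⁻¹ := by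
        rw [div_eq_mul_inv]; ring
    _ ≤ (Real.sqrt (2 * π))⁻¹ * Real.exp (-(x + x⁻¹) ^ 2 / 2) * x⁻¹ := by
        apply mul_le_mul_of_nonneg_right _ (by positivity)
        exact mul_le_mul_of_nonneg_left hexp hc.le
    _ = x⁻¹ * ((Real.sqrt (2 * π))⁻¹ * Real.exp (-(x + x⁻¹) ^ 2 / 2)) := by ring

lemma secondMoment' (k γ : ℝ) :
    (∫ x in {x : ℝ | γ ≤ x ∨ x ≤ -k * γ},
      (Real.exp (-γ * x + γ ^ 2 / 2)) ^ 2 *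
        ((Real.sqrt (2 * π))⁻¹ * Real.exp (-(x - γ) ^ 2 / 2)))
    = ∫ x in {x : ℝ | γ ≤ x ∨ x ≤ -k * γ}, Real.exp (γ ^ 2) * gpdf (x + γ) := by
  apply setIntegral_congr_fun (by
    have : {x : ℝ | γ ≤ x ∨ x ≤ -k * γ} = Ici γ ∪ Iic (-k * γ) := by
      ext t; simp [mem_Ici, mem_Iic]
    rw [this]; exact measurableSet_Ici.union measurableSet_Iic)
  intro x _
  have e1 : Real.exp (-γ * x + γ ^ 2 / 2) ^ 2 * Real.exp (-(x - γ) ^ 2 / 2)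
      = Real.exp (γ ^ 2) * Real.exp (-(x + γ) ^ 2 / 2) := by
    rw [sq, ← Real.exp_add, ← Real.exp_add, ← Real.exp_add]
    congr 1; ring
  calc (Real.exp (-γ * x + γ ^ 2 / 2)) ^ 2 *
        ((Real.sqrt (2 * π))⁻¹ * Real.exp (-(x - γ) ^ 2 / 2))
      = (Real.sqrt (2 * π))⁻¹ *
        (Real.exp (-γ * x + γ ^ 2 / 2) ^ 2 * Real.exp (-(x - γ) ^ 2 / 2)) := by ring
    _ = (Real.sqrt (2 * π))⁻¹ * (Real.exp (γ ^ 2) * Real.exp (-(x + γ) ^ 2 / 2)) := by rw [e1]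
    _ = Real.exp (γ ^ 2) * gpdf (x + γ) := by unfold gpdf; ring

lemma gpdf_neg (x : ℝ) : gpdf (-x) = gpdf x := by unfold gpdf; ring_nf

lemma Iic_integral (cc : ℝ) : (∫ t in Iic cc, gpdf t) = PhiBar (-cc) := by
  rw [PhiBar_eq_Ioi, ← integral_comp_neg_Iic cc gpdf]
  simp_rw [gpdf_neg]

lemma secondMoment_eq (k : ℝ) (hk : 3 ≤ k) (γ : ℝ) (hγ : 0 < γ) :
    secondMoment k γ = Real.exp (γ ^ 2) * (PhiBar (2 * γ) + PhiBar ((k - 1) * γ)) := by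
  unfold secondMoment
  rw [secondMoment', integral_const_mul]
  congr 1
  have hS : {x : ℝ | γ ≤ x ∨ x ≤ -k * γ}
      = (fun x => x + γ) ⁻¹' {t : ℝ | 2 * γ ≤ t ∨ t ≤ -((k - 1) * γ)} := by
    ext x
    simp only [mem_setOf_eq, mem_preimage]
    constructor <;> rintro (h | h)
    · left; linarith
    · right; linarith
    · left; linarith
    · right; linarith
  have he : MeasurableEmbedding (fun x : ℝ => x + γ) :=
    (Homeomorph.addRight γ).isClosedEmbedding.measurableEmbedding
  have hmap : (∫ x in {x : ℝ | γ ≤ x ∨ x ≤ -k * γ}, gpdf (x + γ))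
      = ∫ t in {t : ℝ | 2 * γ ≤ t ∨ t ≤ -((k - 1) * γ)}, gpdf t := by
    rw [hS, ← he.setIntegral_map gpdf, map_add_right_eq_self]
  rw [hmap]
  have hT : {t : ℝ | 2 * γ ≤ t ∨ t ≤ -((k - 1) * γ)}
      = Ici (2 * γ) ∪ Iic (-((k - 1) * γ)) := by
    ext t; simp [mem_Ici, mem_Iic]
  rw [hT]
  have hdisj : Disjoint (Ici (2 * γ)) (Iic (-((k - 1) * γ))) := by
    rw [Set.disjoint_left]
    intro t ht ht'
    simp only [mem_Ici] at ht
    simp only [mem_Iic] at ht'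
    nlinarith
  rw [setIntegral_union hdisj measurableSet_Iic
    gpdf_integrable.integrableOn gpdf_integrable.integrableOn]
  rw [Iic_integral, neg_neg]
  congr 1

lemma ratio_bounds {b c γ E1 E2 A P : ℝ} (hb0 : 0 < b) (hc0 : 0 < c) (hγ0 : 0 < γ)
    (hE10 : 0 < E1) (f4 : E1 * E1 = E2)
    (hPub : P ≤ 2 * c * (E1 / γ)) (hPlb : b * (E1 / γ) ≤ P)
    (hAub : A ≤ c * (E2 / γ)) (hAlb : b / 2 * (E2 / γ) ≤ A) :
    b / (8 * c ^ 2) * γ ≤ A / P ^ 2 ∧ A / P ^ 2 ≤ c / b ^ 2 * γ := by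
  have hP0 : 0 < P := lt_of_lt_of_le (by positivity) hPlb
  have hP20 : 0 < P ^ 2 := by positivity
  constructor
  · rw [le_div_iff₀ hP20]
    have hPsq : P ^ 2 ≤ (2 * c * (E1 / γ)) ^ 2 := pow_le_pow_left₀ hP0.le hPub 2
    have key : b / (8 * c ^ 2) * γ * (2 * c * (E1 / γ)) ^ 2 = b / 2 * (E2 / γ) := by
      rw [← f4]; field_simp; ring
    calc b / (8 * c ^ 2) * γ * P ^ 2
        ≤ b / (8 * c ^ 2) * γ * (2 * c * (E1 / γ)) ^ 2 :=
          mul_le_mul_of_nonneg_left hPsq (by positivity)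
      _ = b / 2 * (E2 / γ) := key
      _ ≤ A := hAlb
  · rw [div_le_iff₀ hP20]
    have hPsq : (b * (E1 / γ)) ^ 2 ≤ P ^ 2 := pow_le_pow_left₀ (by positivity) hPlb 2
    have key : c / b ^ 2 * γ * (b * (E1 / γ)) ^ 2 = c * (E2 / γ) := by
      rw [← f4]; field_simp
    calc A ≤ c * (E2 / γ) := hAub
      _ = c / b ^ 2 * γ * (b * (E1 / γ)) ^ 2 := key.symm
      _ ≤ c / b ^ 2 * γ * P ^ 2 := mul_le_mul_of_nonneg_left hPsq (by positivity)

lemma main2 (k : ℝ) (hk : 3 ≤ k) :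
    ∃ c₁ c₂ : ℝ, 0 < c₁ ∧ 0 < c₂ ∧ ∀ᶠ γ in atTop,
      c₁ * γ ≤ secondMoment k γ / (PhiBar γ + PhiBar (k * γ)) ^ 2 ∧
      secondMoment k γ / (PhiBar γ + PhiBar (k * γ)) ^ 2 ≤ c₂ * γ := by
  have hc0 : 0 < (Real.sqrt (2 * π))⁻¹ := inv_pos.2 (Real.sqrt_pos.2 (by positivity))
  set c : ℝ := (Real.sqrt (2 * π))⁻¹
  have hb0 : 0 < c * Real.exp (-(3:ℝ)/2) := mul_pos hc0 (Real.exp_pos _)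
  set b : ℝ := c * Real.exp (-(3:ℝ)/2)
  refine ⟨b / (8 * c ^ 2), c / b ^ 2, by positivity, by positivity, ?_⟩
  filter_upwards [eventually_ge_atTop (1:ℝ)] with γ hγ
  have hγ0 : 0 < γ := lt_of_lt_of_le one_pos hγ
  have hkγ0 : 0 < k * γ := by nlinarith
  have f1 : Real.exp (γ ^ 2) * Real.exp (-(2 * γ) ^ 2 / 2) = Real.exp (-γ ^ 2) := by
    rw [← Real.exp_add]; congr 1; ring
  have f4 : Real.exp (-γ ^ 2 / 2) * Real.exp (-γ ^ 2 / 2) = Real.exp (-γ ^ 2) := by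
    rw [← Real.exp_add]; congr 1; ring
  have hE10 : 0 < Real.exp (-γ ^ 2 / 2) := Real.exp_pos _
  have hX0 : 0 < Real.exp (-(2 * γ) ^ 2 / 2) := Real.exp_pos _
  -- bounds on P
  have hPub : PhiBar γ + PhiBar (k * γ) ≤ 2 * c * (Real.exp (-γ ^ 2 / 2) / γ) := by
    have h1 : PhiBar γ ≤ c * (Real.exp (-γ ^ 2 / 2) / γ) := PhiBar_le hγ0
    have h2 : PhiBar (k * γ) ≤ c * (Real.exp (-γ ^ 2 / 2) / γ) := by
      refine le_trans (PhiBar_le hkγ0) ?_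
      apply mul_le_mul_of_nonneg_left _ hc0.le
      apply div_le_div₀ hE10.le _ hγ0 (by nlinarith)
      refine Real.exp_le_exp.2 ?_
      nlinarith [mul_nonneg (by nlinarith : (0:ℝ) ≤ k ^ 2 - 1) (sq_nonneg γ)]
    linarith
  have hPlb : b * (Real.exp (-γ ^ 2 / 2) / γ) ≤ PhiBar γ + PhiBar (k * γ) := by
    have h1 := PhiBar_ge hγ
    have h2 : 0 ≤ PhiBar (k * γ) := PhiBar_nonneg _
    have : b * (Real.exp (-γ ^ 2 / 2) / γ)
        = c * Real.exp (-(3:ℝ)/2) * (Real.exp (-γ ^ 2 / 2) / γ) := rfl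
    linarith [h1]
  -- bounds on A
  have hAub : secondMoment k γ ≤ c * (Real.exp (-γ ^ 2) / γ) := by
    rw [secondMoment_eq k hk γ hγ0]
    have h1 : PhiBar (2 * γ) ≤ c * (Real.exp (-(2 * γ) ^ 2 / 2) / (2 * γ)) :=
      PhiBar_le (by linarith)
    have h2 : PhiBar ((k - 1) * γ) ≤ c * (Real.exp (-(2 * γ) ^ 2 / 2) / (2 * γ)) := by
      refine le_trans (PhiBar_le (by nlinarith)) ?_
      apply mul_le_mul_of_nonneg_left _ hc0.le
      apply div_le_div₀ hX0.le _ (by linarith) (by nlinarith)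
      refine Real.exp_le_exp.2 ?_
      nlinarith [mul_nonneg (by nlinarith : (0:ℝ) ≤ (k - 1) ^ 2 - 4) (sq_nonneg γ)]
    calc Real.exp (γ ^ 2) * (PhiBar (2 * γ) + PhiBar ((k - 1) * γ))
        ≤ Real.exp (γ ^ 2)
          * (c * (Real.exp (-(2 * γ) ^ 2 / 2) / (2 * γ))
            + c * (Real.exp (-(2 * γ) ^ 2 / 2) / (2 * γ))) :=
          mul_le_mul_of_nonneg_left (add_le_add h1 h2) (Real.exp_pos _).le
      _ = c * ((Real.exp (γ ^ 2) * Real.exp (-(2 * γ) ^ 2 / 2)) / γ) := by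
          field_simp; ring
      _ = c * (Real.exp (-γ ^ 2) / γ) := by rw [f1]
  have hAlb : b / 2 * (Real.exp (-γ ^ 2) / γ) ≤ secondMoment k γ := by
    rw [secondMoment_eq k hk γ hγ0]
    have h1 := PhiBar_ge (by linarith : (1:ℝ) ≤ 2 * γ)
    have h2 : 0 ≤ PhiBar ((k - 1) * γ) := PhiBar_nonneg _
    calc b / 2 * (Real.exp (-γ ^ 2) / γ)
        = Real.exp (γ ^ 2)
          * (c * Real.exp (-(3:ℝ)/2) * (Real.exp (-(2 * γ) ^ 2 / 2) / (2 * γ))) := by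
          rw [← f1]; field_simp; ring; rfl
      _ ≤ Real.exp (γ ^ 2) * (PhiBar (2 * γ) + PhiBar ((k - 1) * γ)) :=
          mul_le_mul_of_nonneg_left (by linarith) (Real.exp_pos _).le
  exact ratio_bounds hb0 hc0 hγ0 hE10 f4 hPub hPlb hAub hAlb

/-- for `k ≥ 3`, `Ẽ(Z²) = e^{γ²}(Φ̄(2γ) + Φ̄((k-1)γ))` and
`Ẽ(Z²)/p² = Θ(γ)` as `γ → ∞`, where `p = Φ̄(γ) + Φ̄(kγ)`; hence the IS estimator
is asymptotically efficient despite missing the dominating point `-kγ`. -/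
theorem IS_efficient_for_k_ge_three (k : ℝ) (hk : 3 ≤ k) :
    (∀ γ : ℝ, 0 < γ →
      secondMoment k γ = Real.exp (γ ^ 2) * (PhiBar (2 * γ) + PhiBar ((k - 1) * γ))) ∧
    ∃ c₁ c₂ : ℝ, 0 < c₁ ∧ 0 < c₂ ∧ ∀ᶠ γ in atTop,
      c₁ * γ ≤ secondMoment k γ / (PhiBar γ + PhiBar (k * γ)) ^ 2 ∧
      secondMoment k γ / (PhiBar γ + PhiBar (k * γ)) ^ 2 ≤ c₂ * γ :=
  ⟨fun γ hγ => secondMoment_eq k hk γ hγ, main2 k hk⟩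
end
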